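/- arXiv:math/0405394 — 5 statements merged into one kernel-verified Lean document; each statement's English description precedes it below -/
import Mathlib

section
/- Let φ = Σ_{i=1}^k ω_i ⊗ v_i be a finite-rank endomorphism of a real vector space V, and M the k×k matrix with M_{ij} = ω_i(v_j). Then the formal power series exp(−Σ_{n≥1} tr(φ^n) z^n / n) equals det(Id − zM) in ℝ[[z]]. -/
open PowerSeries

/-- The trace of a finite-rank endomorphism: the trace of its restriction to its image. -/
noncomputable def traceFiniteRank {V : Type*} [AddCommGroup V] [Module ℝ V]
    (ψ : V →ₗ[ℝ] V) : ℝ :=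
  LinearMap.trace ℝ (LinearMap.range ψ)
    (ψ.restrict (fun x _ => LinearMap.mem_range_self ψ x))

section Aux

variable {V : Type*} [AddCommGroup V] [Module ℝ V]

lemma traceFiniteRank_eq_of_le (ψ : V →ₗ[ℝ] V) (W : Submodule ℝ V) [Module.Finite ℝ W]
    (h : ∀ x, ψ x ∈ W) :
    traceFiniteRank ψ = LinearMap.trace ℝ W (ψ.restrict fun x _ => h x) := by
  have hRW : LinearMap.range ψ ≤ W := by
    rintro x ⟨y, rfl⟩; exact h y
  haveI : Module.Finite ℝ (LinearMap.range ψ) := Submodule.finiteDimensional_of_le hRW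
  set ι : LinearMap.range ψ →ₗ[ℝ] W := Submodule.inclusion hRW
  set c : W →ₗ[ℝ] LinearMap.range ψ :=
    (ψ ∘ₗ W.subtype).codRestrict (LinearMap.range ψ) (fun x => LinearMap.mem_range_self ψ (x : V))
  have h1 : ψ.restrict (fun x _ => h x) = ι ∘ₗ c := by
    ext x; rfl
  have h2 : c ∘ₗ ι = ψ.restrict (fun x _ => LinearMap.mem_range_self ψ x) := by
    ext x; rfl
  rw [traceFiniteRank, ← h2, h1, LinearMap.trace_comp_comm']

lemma traceFiniteRank_comp (k : ℕ) (f : (Fin k → ℝ) →ₗ[ℝ] V) (g : V →ₗ[ℝ] (Fin k → ℝ)) :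
    traceFiniteRank (f ∘ₗ g) = LinearMap.trace ℝ (Fin k → ℝ) (g ∘ₗ f) := by
  have h : ∀ x, (f ∘ₗ g) x ∈ LinearMap.range f := fun x => LinearMap.mem_range_self f (g x)
  haveI : Module.Finite ℝ (LinearMap.range f) := inferInstance
  rw [traceFiniteRank_eq_of_le (f ∘ₗ g) (LinearMap.range f) h]
  have h1 : (f ∘ₗ g).restrict (fun x _ => h x)
      = f.rangeRestrict ∘ₗ (g ∘ₗ (LinearMap.range f).subtype) := by
    ext x; rfl
  have h2 : (g ∘ₗ (LinearMap.range f).subtype) ∘ₗ f.rangeRestrict = g ∘ₗ f := by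
    ext x; rfl
  rw [h1, LinearMap.trace_comp_comm', h2]

lemma comp_pow_succ {k : ℕ} (p : V →ₗ[ℝ] (Fin k → ℝ)) (q : (Fin k → ℝ) →ₗ[ℝ] V) (m : ℕ) :
    (q ∘ₗ p) ^ (m + 1) = q ∘ₗ (((p ∘ₗ q) ^ m) ∘ₗ p) := by
  induction m with
  | zero => simp [pow_succ]; rfl
  | succ m ih =>
      rw [pow_succ, ih]
      simp only [pow_succ]
      ext x; simp [LinearMap.comp_apply, Module.End.mul_apply]

lemma traceFiniteRank_pow_eq (k : ℕ) (ω : Fin k → (V →ₗ[ℝ] ℝ)) (v : Fin k → V)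
    (φ : V →ₗ[ℝ] V) (hφ : φ = ∑ i, (ω i).smulRight (v i)) (m : ℕ) :
    traceFiniteRank (φ ^ (m + 1))
      = Matrix.trace ((Matrix.of fun i j => ω i (v j)) ^ (m + 1)) := by
  classical
  set M : Matrix (Fin k) (Fin k) ℝ := Matrix.of fun i j => ω i (v j)
  set p : V →ₗ[ℝ] (Fin k → ℝ) := LinearMap.pi (fun i => ω i)
  set q : (Fin k → ℝ) →ₗ[ℝ] V := ∑ i, (LinearMap.proj i).smulRight (v i)
  have hq : ∀ c : Fin k → ℝ, q c = ∑ i, c i • v i := by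
    intro c; simp [q, LinearMap.sum_apply]
  have hqp : φ = q ∘ₗ p := by
    rw [hφ]; ext x; simp [hq, p, LinearMap.sum_apply]
  have hpq : p ∘ₗ q = Matrix.mulVecLin M := by
    ext c i
    simp [p, hq, Matrix.mulVec, dotProduct, M, map_sum, Finset.mul_sum, mul_comm, Pi.single_apply]
  rw [hqp, comp_pow_succ, traceFiniteRank_comp]
  have : (((p ∘ₗ q) ^ m) ∘ₗ p) ∘ₗ q = (p ∘ₗ q) ^ (m + 1) := by
    rw [pow_succ]
    ext x; simp [LinearMap.comp_apply, Module.End.mul_apply]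
  rw [this, hpq]
  have hml : Matrix.mulVecLin M ^ (m + 1) = Matrix.mulVecLin (M ^ (m + 1)) := by
    induction (m + 1) with
    | zero => ext x i; simp
    | succ n ih =>
        rw [pow_succ, pow_succ, ih]
        ext x i
        simp [Module.End.mul_apply, Matrix.mulVecLin_mul]
  rw [hml, LinearMap.trace_eq_matrix_trace ℝ (Pi.basisFun ℝ (Fin k))]
  congr 1
  rw [← Matrix.toLin'_apply' (M ^ (m + 1)), LinearMap.toMatrix_eq_toMatrix',
    LinearMap.toMatrix'_toLin']

lemma ode_unique (T f g : PowerSeries ℝ) (hf : derivativeFun f = T * f)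
    (hg : derivativeFun g = T * g)
    (h0 : constantCoeff f = constantCoeff g) : f = g := by
  ext n
  induction n using Nat.strong_induction_on with
  | _ n ih =>
    match n with
    | 0 => simpa using h0
    | n + 1 =>
      have hfc := congrArg (coeff n) hf
      have hgc := congrArg (coeff n) hg
      rw [show ∀ f : PowerSeries ℝ, derivativeFun f = derivative ℝ f from fun _ => rfl,
        coeff_derivativeFun, coeff_mul] at hfc hgc
      have hsum : ∑ p ∈ Finset.HasAntidiagonal.antidiagonal n, coeff p.1 T * coeff p.2 f
          = ∑ p ∈ Finset.HasAntidiagonal.antidiagonal n, coeff p.1 T * coeff p.2 g := by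
        refine Finset.sum_congr rfl fun p hp => ?_
        rw [ih p.2 (Nat.lt_succ_of_le (Finset.HasAntidiagonal.antidiagonal.snd_le hp))]
      have : coeff (n + 1) f * (n + 1 : ℝ) = coeff (n + 1) g * (n + 1 : ℝ) := by
        rw [hfc, hgc, hsum]
      exact mul_right_cancel₀ (by positivity) this

lemma derivativeFun_prod {ι : Type*} [DecidableEq ι] (s : Finset ι) (f : ι → PowerSeries ℝ) :
    derivativeFun (∏ i ∈ s, f i)
      = ∑ i ∈ s, (∏ j ∈ s.erase i, f j) * derivativeFun (f i) := by
  induction s using Finset.induction_on with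
  | empty => simp [derivativeFun_one]
  | insert a s hx ih =>
    rw [Finset.prod_insert hx, derivativeFun_mul, Finset.sum_insert hx, ih,
      Finset.erase_insert hx, smul_eq_mul, smul_eq_mul, Finset.mul_sum]
    rw [add_comm]
    congr 1
    refine Finset.sum_congr rfl fun i hi => ?_
    rw [Finset.erase_insert_of_ne (by rintro rfl; exact hx hi),
      Finset.prod_insert (by simp [hx])]
    ring

lemma derivativeFun_det {k : ℕ} (A : Matrix (Fin k) (Fin k) (PowerSeries ℝ)) :
    derivativeFun A.det
      = ∑ i, (A.updateCol i fun r => derivativeFun (A r i)).det := by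
  have hd : ∀ f : PowerSeries ℝ, derivativeFun f = derivative ℝ f := fun _ => rfl
  have hsign : ∀ σ : Equiv.Perm (Fin k),
      ((Equiv.Perm.sign σ : ℤ) : PowerSeries ℝ) = C ((Equiv.Perm.sign σ : ℤ) : ℝ) := by
    intro σ; simp
  rw [Matrix.det_apply', hd, map_sum]
  have step1 : ∀ σ : Equiv.Perm (Fin k),
      derivative ℝ (((Equiv.Perm.sign σ : ℤ) : PowerSeries ℝ) * ∏ i, A (σ i) i)
        = ∑ i, ((Equiv.Perm.sign σ : ℤ) : PowerSeries ℝ) *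
            ((∏ j ∈ Finset.univ.erase i, A (σ j) j) * derivativeFun (A (σ i) i)) := by
    intro σ
    rw [← hd, derivativeFun_mul, hsign, hd (C _), derivativeFun_C, smul_zero, add_zero, smul_eq_mul,
      ← hsign, derivativeFun_prod, Finset.mul_sum]
  simp_rw [step1]
  rw [Finset.sum_comm]
  refine Finset.sum_congr rfl fun i _ => ?_
  rw [Matrix.det_apply']
  refine Finset.sum_congr rfl fun σ _ => ?_
  rw [← Finset.mul_prod_erase Finset.univ _ (Finset.mem_univ i)]
  rw [Matrix.updateCol_self]
  have : ∀ j ∈ Finset.univ.erase i,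
      A.updateCol i (fun r => derivativeFun (A r i)) (σ j) j = A (σ j) j := by
    intro j hj
    rw [Matrix.updateCol_apply, if_neg (Finset.ne_of_mem_erase hj)]
  rw [Finset.prod_congr rfl this]
  ring

variable {k : ℕ}

noncomputable def Amat (M : Matrix (Fin k) (Fin k) ℝ) : Matrix (Fin k) (Fin k) (PowerSeries ℝ) :=
  1 - (X : PowerSeries ℝ) • (Matrix.of fun i j => C (M i j))

noncomputable def Bmat (M : Matrix (Fin k) (Fin k) ℝ) : Matrix (Fin k) (Fin k) (PowerSeries ℝ) :=
  Matrix.of fun i j => mk fun n => (M ^ n) i j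

lemma coeff_Amat_mul (M : Matrix (Fin k) (Fin k) ℝ) (i j : Fin k) :
    (Amat M * Bmat M) i j
      = Bmat M i j - X * ∑ l, C (M i l) * Bmat M l j := by
  rw [Matrix.mul_apply]
  have : ∀ l, Amat M i l * Bmat M l j
      = (if i = l then Bmat M l j else 0) - X * (C (M i l) * Bmat M l j) := by
    intro l
    simp only [Amat, Matrix.sub_apply, Matrix.one_apply, Matrix.smul_apply, Matrix.of_apply,
      smul_eq_mul]
    split_ifs <;> ring
  rw [Finset.sum_congr rfl fun l _ => this l, Finset.sum_sub_distrib,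
    Finset.sum_ite_eq Finset.univ i (fun l => Bmat M l j), if_pos (Finset.mem_univ i),
    ← Finset.mul_sum]

lemma Amat_mul_Bmat (M : Matrix (Fin k) (Fin k) ℝ) : Amat M * Bmat M = 1 := by
  ext i j n
  rw [coeff_Amat_mul]
  cases n with
  | zero =>
    simp [Bmat, Matrix.one_apply, coeff_zero_eq_constantCoeff, apply_ite (constantCoeff)]
  | succ n =>
    have hX : coeff (n + 1) (X * ∑ l, C (M i l) * Bmat M l j)
        = coeff n (∑ l, C (M i l) * Bmat M l j) := by
      rw [coeff_succ_X_mul]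
    rw [map_sub, hX, map_sum]
    have : ∀ l, coeff n (C (M i l) * Bmat M l j) = M i l * (M ^ n) l j := by
      intro l; rw [coeff_C_mul]; simp [Bmat]
    rw [Finset.sum_congr rfl fun l _ => this l]
    have h1 : coeff (n + 1) (Bmat M i j) = (M ^ (n + 1)) i j := by simp [Bmat]
    have h2 : (M ^ (n + 1)) i j = ∑ l, M i l * (M ^ n) l j := by
      rw [pow_succ']; exact Matrix.mul_apply
    rw [h1]
    have h3 : ∑ l, M i l * (M ^ n) l j = (M ^ (n + 1)) i j := by
      rw [pow_succ', Matrix.mul_apply]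
    rw [h3, sub_self, Matrix.one_apply]
    split_ifs <;> simp

lemma adjugate_Amat (M : Matrix (Fin k) (Fin k) ℝ) :
    (Amat M).adjugate = (Amat M).det • Bmat M := by
  calc (Amat M).adjugate = (Amat M).adjugate * (Amat M * Bmat M) := by
        rw [Amat_mul_Bmat, mul_one]
    _ = ((Amat M).adjugate * Amat M) * Bmat M := by rw [mul_assoc]
    _ = (Amat M).det • Bmat M := by rw [Matrix.adjugate_mul, Matrix.smul_mul, one_mul]

lemma constantCoeff_det_Amat (M : Matrix (Fin k) (Fin k) ℝ) :
    constantCoeff (Amat M).det = 1 := by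
  have : constantCoeff (Amat M).det = ((Amat M).map (constantCoeff)).det :=
    (RingHom.map_det (constantCoeff) (Amat M)).symm ▸ rfl
  rw [this]
  have h1 : (Amat M).map (constantCoeff) = 1 := by
    ext i j
    simp [Amat, Matrix.one_apply, apply_ite (constantCoeff)]
  rw [h1, Matrix.det_one]

lemma derivativeFun_det_Amat (M : Matrix (Fin k) (Fin k) ℝ) :
    derivativeFun (Amat M).det
      = -(mk fun n => (M ^ (n + 1)).trace) * (Amat M).det := by
  rw [derivativeFun_det]
  have hder : ∀ r i, derivativeFun (Amat M r i) = -C (M r i) := by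
    intro r i
    have : Amat M r i = (if r = i then 1 else 0) - X * C (M r i) := by
      simp only [Amat, Matrix.sub_apply, Matrix.one_apply, Matrix.smul_apply, Matrix.of_apply,
        smul_eq_mul]
    rw [this]
    have hd : ∀ f : PowerSeries ℝ, derivativeFun f = derivative ℝ f := fun _ => rfl
    rw [hd, map_sub, ← hd, ← hd, derivativeFun_mul, hd (C _), derivativeFun_C, smul_zero, zero_add,
      smul_eq_mul]
    have : derivativeFun (X : PowerSeries ℝ) = 1 := derivative_X
    rw [this, mul_one]
    split_ifs
    · rw [derivativeFun_one, zero_sub]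
    · rw [show derivativeFun (0 : PowerSeries ℝ) = 0 from map_zero (derivative ℝ), zero_sub]
  have step : ∀ i, ((Amat M).updateCol i fun r => derivativeFun (Amat M r i)).det
      = ∑ r, (Amat M).adjugate i r * (-(C (M r i))) := by
    intro i
    rw [← Matrix.cramer_apply, Matrix.cramer_eq_adjugate_mulVec]
    simp_rw [hder]
    rfl
  rw [Finset.sum_congr rfl fun i _ => step i]
  have hT : ∑ i, ∑ r, Bmat M i r * C (M r i)
      = mk fun n => (M ^ (n + 1)).trace := by
    ext n
    rw [map_sum, coeff_mk, Matrix.trace]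
    refine Finset.sum_congr rfl fun i _ => ?_
    rw [map_sum, Matrix.diag_apply, pow_succ, Matrix.mul_apply]
    refine Finset.sum_congr rfl fun r _ => ?_
    rw [mul_comm ((Bmat M) i r), coeff_C_mul]
    simp [Bmat, mul_comm]
  have hsum : ∀ i r : Fin k, (Amat M).adjugate i r * (-(C (M r i)))
      = -((Amat M).det * (Bmat M i r * C (M r i))) := by
    intro i r
    rw [adjugate_Amat]
    simp only [Matrix.smul_apply, smul_eq_mul]
    ring
  calc ∑ i, ∑ r, (Amat M).adjugate i r * (-(C (M r i)))
      = ∑ i, ∑ r, -((Amat M).det * (Bmat M i r * C (M r i))) := by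
        exact Finset.sum_congr rfl fun i _ => Finset.sum_congr rfl fun r _ => hsum i r
    _ = -((Amat M).det * ∑ i, ∑ r, Bmat M i r * C (M r i)) := by
        rw [Finset.mul_sum, ← Finset.sum_neg_distrib]
        refine Finset.sum_congr rfl fun i _ => ?_
        rw [Finset.mul_sum, ← Finset.sum_neg_distrib]
    _ = -(mk fun n => (M ^ (n + 1)).trace) * (Amat M).det := by
        rw [hT]; ring

end Aux

/-- For a finite-rank endomorphism `φ = Σ ωᵢ ⊗ vᵢ` with matrix
`M i j = ωᵢ (vⱼ)`, the formal power series `exp(−Σ_{n≥1} tr(φⁿ) zⁿ/n)` equals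
`det(Id − z·M)` in `ℝ[[z]]`.  The exponential `D` is characterized (uniquely, in
characteristic zero) by `D(0) = 1` together with the differential equation
`D' = −(Σ_{n≥1} tr(φⁿ) z^{n−1})·D`. -/
theorem exp_neg_trace_series_eq_det
    (V : Type*) [AddCommGroup V] [Module ℝ V] (k : ℕ)
    (ω : Fin k → (V →ₗ[ℝ] ℝ)) (v : Fin k → V) (φ : V →ₗ[ℝ] V)
    (hφ : φ = ∑ i, (ω i).smulRight (v i))
    (D : PowerSeries ℝ) (hD0 : PowerSeries.constantCoeff D = 1)
    (hDode : PowerSeries.derivativeFun D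
      = -(PowerSeries.mk fun m => traceFiniteRank (φ ^ (m + 1))) * D) :
    D = Matrix.det ((1 : Matrix (Fin k) (Fin k) (PowerSeries ℝ)) -
        (PowerSeries.X : PowerSeries ℝ) • (Matrix.of fun i j => PowerSeries.C (ω i (v j)))) := by
  set M : Matrix (Fin k) (Fin k) ℝ := Matrix.of fun i j => ω i (v j) with hM
  have htarget : ((1 : Matrix (Fin k) (Fin k) (PowerSeries ℝ)) -
      (PowerSeries.X : PowerSeries ℝ) •
        (Matrix.of fun i j => PowerSeries.C (ω i (v j)))) = Amat M := rfl
  rw [htarget]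
  have htr : (mk fun m => traceFiniteRank (φ ^ (m + 1)))
      = mk fun m => (M ^ (m + 1)).trace := by
    refine PowerSeries.ext (R := ℝ) fun n => ?_
    rw [coeff_mk, coeff_mk, traceFiniteRank_pow_eq k ω v φ hφ n]
  rw [htr] at hDode
  exact ode_unique (-(mk fun m => (M ^ (m + 1)).trace)) D (Amat M).det hDode
    (derivativeFun_det_Amat M) (hD0.trans (constantCoeff_det_Amat M).symm)
end

section
/- Let χ, φ, ψ be commuting finite-rank endomorphisms of a short exact sequence 0 → U → V → W → 0 as above. Then in ℝ[[z]] the determinant power series satisfy D_φ(z) = D_χ(z)·D_ψ(z), where D_α(z) = exp(−Σ_{n≥1} tr(α^n) z^n / n). -/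
open LinearMap in

private lemma traceFiniteRank_eq_trace_restrict {V : Type*} [AddCommGroup V] [Module ℝ V]
    (α : V →ₗ[ℝ] V) (T : Submodule ℝ V) [FiniteDimensional ℝ T]
    (hT : ∀ x, α x ∈ T) :
    traceFiniteRank α = LinearMap.trace ℝ T (α.restrict (fun x _ => hT x)) := by
  have hle : LinearMap.range α ≤ T := by
    rintro _ ⟨x, rfl⟩; exact hT x
  set f : T →ₗ[ℝ] T := α.restrict (fun x _ => hT x) with hf
  have hfq : ∀ x : T, f x ∈ Submodule.comap T.subtype (LinearMap.range α) := by
    intro x; exact LinearMap.mem_range_self α (x : V)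
  rw [← LinearMap.trace_restrict_eq_of_forall_mem _ f hfq]
  set e := Submodule.comapSubtypeEquivOfLe hle
  rw [← LinearMap.trace_conj' _ e]
  congr 1

private lemma trace_additive
    {U V W : Type*} [AddCommGroup U] [Module ℝ U] [AddCommGroup V] [Module ℝ V]
    [AddCommGroup W] [Module ℝ W]
    (i : U →ₗ[ℝ] V) (p : V →ₗ[ℝ] W)
    (hi : Function.Injective i) (hp : Function.Surjective p)
    (hexact : LinearMap.range i = LinearMap.ker p)
    (χ : U →ₗ[ℝ] U) (φ : V →ₗ[ℝ] V) (ψ : W →ₗ[ℝ] W)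
    (hcomm₁ : φ ∘ₗ i = i ∘ₗ χ) (hcomm₂ : p ∘ₗ φ = ψ ∘ₗ p)
    (hφ : FiniteDimensional ℝ (LinearMap.range φ)) :
    traceFiniteRank φ = traceFiniteRank χ + traceFiniteRank ψ := by
  have hc₁ : ∀ u, φ (i u) = i (χ u) := fun u => LinearMap.congr_fun hcomm₁ u
  have hc₂ : ∀ v, p (φ v) = ψ (p v) := fun v => LinearMap.congr_fun hcomm₂ v
  set S := LinearMap.range φ with hS
  haveI : FiniteDimensional ℝ S := hφ
  have hfS : ∀ x, φ x ∈ S := fun x => LinearMap.mem_range_self φ x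
  set f : S →ₗ[ℝ] S := φ.restrict (fun x _ => hfS x) with hf
  set q : Submodule ℝ S := Submodule.comap S.subtype (LinearMap.range i) with hq
  obtain ⟨q', hq'⟩ := q.exists_isCompl
  set π₁ : S →ₗ[ℝ] S := q.subtype ∘ₗ (q.projectionOnto q' hq') with hπ₁
  set π₂ : S →ₗ[ℝ] S := q'.subtype ∘ₗ (q'.projectionOnto q hq'.symm) with hπ₂
  have hid : π₁ + π₂ = LinearMap.id := by
    ext x
    simpa [π₁, π₂] using congrArg Subtype.val
      (Submodule.projection_add_projection_eq_self hq' x)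
  have hπ₁mem : ∀ x : S, π₁ x ∈ q := fun x => (q.projectionOnto q' hq' x).2
  have hπ₂mem : ∀ x : S, π₂ x ∈ q' := fun x => (q'.projectionOnto q hq'.symm x).2
  have hpq : ∀ y : S, y ∈ q → p (y : V) = 0 := by
    intro y hy
    have : (y : V) ∈ LinearMap.ker p := hexact ▸ hy
    exact this
  have hpπ₂ : ∀ s : S, p ((π₂ s : S) : V) = p (s : V) := by
    intro s
    have h1 : (π₁ s : V) + (π₂ s : V) = (s : V) := by
      have := LinearMap.congr_fun hid s
      exact_mod_cast congrArg Subtype.val this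
    have h2 : p (π₁ s : V) = 0 := hpq _ (hπ₁mem s)
    have := congrArg p h1
    rw [map_add, h2, zero_add] at this
    exact this
  -- q is f-invariant
  have hqinv : ∀ x : S, x ∈ q → f x ∈ q := by
    intro x hx
    have hx' : p (x : V) = 0 := hpq x hx
    show φ (x : V) ∈ LinearMap.range i
    rw [hexact]
    show p (φ (x : V)) = 0
    rw [hc₂, hx', map_zero]
  -- split the trace
  have hsplit : traceFiniteRank φ
      = LinearMap.trace ℝ S (f ∘ₗ π₁) + LinearMap.trace ℝ S (f ∘ₗ π₂) := by
    rw [traceFiniteRank_eq_trace_restrict φ S hfS, ← map_add, ← LinearMap.comp_add, hid,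
      LinearMap.comp_id]
  ----------------------------------------------------------------
  -- Piece 1 : trace (f ∘ π₁) = traceFiniteRank χ
  ----------------------------------------------------------------
  set T : Submodule ℝ U := Submodule.comap i S with hT
  have hTmem : ∀ u, χ u ∈ T := by
    intro u
    show i (χ u) ∈ S
    rw [← hc₁]; exact hfS _
  -- the equivalence T ≃ q
  have hj₁ : ∀ x : T, (i ∘ₗ T.subtype) x ∈ S := fun x => x.2
  set j₂ : T →ₗ[ℝ] S := (i ∘ₗ T.subtype).codRestrict S hj₁ with hj₂
  have hj₂q : ∀ x : T, j₂ x ∈ q := by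
    intro x
    show i (x : U) ∈ LinearMap.range i
    exact LinearMap.mem_range_self i _
  set j₃ : T →ₗ[ℝ] q := j₂.codRestrict q hj₂q with hj₃
  have hj₃bij : Function.Bijective j₃ := by
    constructor
    · intro x y hxy
      have : i (x : U) = i (y : U) := by
        have := congrArg (Subtype.val ∘ Subtype.val) hxy
        exact this
      exact Subtype.ext (hi this)
    · rintro ⟨⟨v, hvS⟩, hvq⟩
      obtain ⟨u, hu⟩ := hvq
      have huT : u ∈ T := by show i u ∈ S; rw [hu]; exact hvS
      exact ⟨⟨u, huT⟩, by apply Subtype.ext; apply Subtype.ext; exact hu⟩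
  set e₁ : T ≃ₗ[ℝ] q := LinearEquiv.ofBijective j₃ hj₃bij with he₁
  haveI : FiniteDimensional ℝ T := Module.Finite.equiv e₁.symm
  have key1 : ∀ x : S, (f ∘ₗ π₁) x ∈ q := fun x => hqinv (π₁ x) (hπ₁mem x)
  have piece1 : LinearMap.trace ℝ S (f ∘ₗ π₁) = traceFiniteRank χ := by
    rw [← LinearMap.trace_restrict_eq_of_forall_mem q (f ∘ₗ π₁) key1,
      traceFiniteRank_eq_trace_restrict χ T hTmem, ← LinearMap.trace_conj' _ e₁]
    congr 1
    ext x
    obtain ⟨u, rfl⟩ := e₁.surjective x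
    simp only [LinearEquiv.conj_apply, LinearMap.coe_comp, Function.comp_apply,
      LinearEquiv.coe_coe, LinearEquiv.symm_apply_apply]
    have hfix : π₁ ((e₁ u : q) : S) = ((e₁ u : q) : S) := by
      show (q.subtype (q.projectionOnto q' hq' ((e₁ u : q) : S)) : S) = _
      rw [Submodule.linearProjOfIsCompl_apply_left hq' (e₁ u)]
      rfl
    show φ ((π₁ ((e₁ u : q) : S) : S) : V)
        = ((e₁ ((χ.restrict (fun x _ => hTmem x)) u) : q) : V)
    rw [hfix]
    show φ (i (u : U)) = i (χ (u : U))
    exact hc₁ _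
  ----------------------------------------------------------------
  -- Piece 2 : trace (f ∘ π₂) = traceFiniteRank ψ
  ----------------------------------------------------------------
  set g : S →ₗ[ℝ] S := π₂ ∘ₗ (f ∘ₗ π₂) with hg
  have hsplit2 : LinearMap.trace ℝ S (f ∘ₗ π₂)
      = LinearMap.trace ℝ S (π₁ ∘ₗ (f ∘ₗ π₂)) + LinearMap.trace ℝ S g := by
    conv_lhs => rw [← LinearMap.id_comp (f ∘ₗ π₂), ← hid, LinearMap.add_comp]
    rw [map_add]
  have hzero : LinearMap.trace ℝ S (π₁ ∘ₗ (f ∘ₗ π₂)) = 0 := by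
    have : π₁ ∘ₗ (f ∘ₗ π₂) = π₁ * (f * π₂) := rfl
    rw [this, LinearMap.trace_mul_comm]
    have hππ : π₂ ∘ₗ π₁ = 0 := by
      ext x
      rw [LinearMap.comp_apply, hπ₂]
      simp [Submodule.projectionOnto_apply_of_mem_right hq'.symm (hπ₁mem x)]
    have : (f * π₂) * π₁ = f ∘ₗ (π₂ ∘ₗ π₁) := rfl
    rw [this, hππ, LinearMap.comp_zero, map_zero]
  -- the equivalence q' ≃ range ψ
  have hk : ∀ x : q', (p ∘ₗ (S.subtype ∘ₗ q'.subtype)) x ∈ LinearMap.range ψ := by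
    rintro ⟨⟨v, hvS⟩, hvq'⟩
    obtain ⟨w, hw⟩ := hvS
    show p v ∈ LinearMap.range ψ
    rw [← hw, hc₂]
    exact LinearMap.mem_range_self ψ _
  set k₂ : q' →ₗ[ℝ] LinearMap.range ψ :=
    (p ∘ₗ (S.subtype ∘ₗ q'.subtype)).codRestrict (LinearMap.range ψ) hk with hk₂
  have hk₂bij : Function.Bijective k₂ := by
    constructor
    · intro x y hxy
      have hpeq : p (((x : S) : V)) = p (((y : S) : V)) :=
        congrArg Subtype.val hxy
      have : ((x : S) - (y : S) : S) ∈ q := by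
        show (((x : S) - (y : S) : S) : V) ∈ LinearMap.range i
        rw [hexact]
        show p (((x : S) : V) - ((y : S) : V)) = 0
        rw [map_sub, hpeq, sub_self]
      have h2 : ((x : S) - (y : S) : S) ∈ q' := sub_mem x.2 y.2
      have h3 : ((x : S) - (y : S) : S) = 0 :=
        Submodule.disjoint_def.mp hq'.disjoint _ this h2
      have : (x : S) = (y : S) := by rwa [sub_eq_zero] at h3
      exact Subtype.ext this
    · rintro ⟨y, hy⟩
      obtain ⟨w, hw⟩ := hy
      obtain ⟨v, rfl⟩ := hp w
      set s : S := ⟨φ v, LinearMap.mem_range_self φ v⟩ with hs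
      refine ⟨q'.projectionOnto q hq'.symm s, ?_⟩
      apply Subtype.ext
      show p (((q'.projectionOnto q hq'.symm s : q') : S) : V) = y
      have : ((q'.projectionOnto q hq'.symm s : q') : S) = π₂ s := rfl
      rw [this, hpπ₂]
      show p (φ v) = y
      rw [hc₂, hw]
  set e₂ : q' ≃ₗ[ℝ] LinearMap.range ψ := LinearEquiv.ofBijective k₂ hk₂bij with he₂
  have key2 : ∀ x : S, g x ∈ q' := fun x => hπ₂mem _
  have piece2 : LinearMap.trace ℝ S g = traceFiniteRank ψ := by
    rw [← LinearMap.trace_restrict_eq_of_forall_mem q' g key2]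
    show _ = LinearMap.trace ℝ (LinearMap.range ψ)
      (ψ.restrict (fun x _ => LinearMap.mem_range_self ψ x))
    rw [← LinearMap.trace_conj' _ e₂]
    congr 1
    ext x
    obtain ⟨z, rfl⟩ := e₂.surjective x
    simp only [LinearEquiv.conj_apply, LinearMap.coe_comp, Function.comp_apply,
      LinearEquiv.coe_coe, LinearEquiv.symm_apply_apply]
    show p (((g ((z : S)) : S) : V)) = ψ ((e₂ z : W))
    have h1 : p (((g ((z : S)) : S) : V)) = p ((f (π₂ (z : S)) : V)) := hpπ₂ _
    have h2 : π₂ (z : S) = (z : S) := by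
      show q'.subtype ((q'.projectionOnto q hq'.symm) (z : S)) = (z : S)
      rw [Submodule.linearProjOfIsCompl_apply_left hq'.symm z]
      rfl
    rw [h1, h2]
    show p (φ (((z : S) : V))) = ψ ((e₂ z : W))
    rw [hc₂]
    rfl
  rw [hsplit, piece1, hsplit2, hzero, zero_add, piece2]



private lemma ode_unique_s5 (f A B : PowerSeries ℝ)
    (hA0 : PowerSeries.constantCoeff (R := ℝ) A = 1) (hB0 : PowerSeries.constantCoeff (R := ℝ) B = 1)
    (hA : PowerSeries.derivativeFun A = f * A) (hB : PowerSeries.derivativeFun B = f * B) :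
    A = B := by
  ext n
  induction n using Nat.strong_induction_on with
  | _ n ih =>
    match n with
    | 0 => simpa [PowerSeries.coeff_zero_eq_constantCoeff] using hA0.trans hB0.symm
    | Nat.succ n =>
      have hA' := congrArg (PowerSeries.coeff (R := ℝ) n) hA
      have hB' := congrArg (PowerSeries.coeff (R := ℝ) n) hB
      change PowerSeries.coeff (R := ℝ) n (PowerSeries.derivative ℝ A) = _ at hA'
      change PowerSeries.coeff (R := ℝ) n (PowerSeries.derivative ℝ B) = _ at hB'
      rw [PowerSeries.coeff_derivative] at hA' hB'
      have hne : ((n : ℝ) + 1) ≠ 0 := by positivity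
      apply mul_right_cancel₀ hne
      rw [hA', hB', PowerSeries.coeff_mul, PowerSeries.coeff_mul]
      apply Finset.sum_congr rfl
      intro x hx
      have hx2 : x.2 < n + 1 :=
        Nat.lt_succ_of_le (Nat.le.intro (by rw [Nat.add_comm]; exact Finset.HasAntidiagonal.mem_antidiagonal.mp hx))
      rw [ih x.2 hx2]

/-- `D` is the determinant power series `D_α(z) = exp(−Σ_{n≥1} tr(αⁿ) zⁿ/n)` of the
finite-rank endomorphism `α`; in characteristic zero this is uniquely characterized
by `D(0) = 1` and the differential equation `D' = −(Σ_{n≥1} tr(αⁿ) z^{n−1})·D`. -/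
def IsDetSeries {V : Type*} [AddCommGroup V] [Module ℝ V]
    (α : V →ₗ[ℝ] V) (D : PowerSeries ℝ) : Prop :=
  PowerSeries.constantCoeff (R := ℝ) D = 1 ∧
  PowerSeries.derivativeFun D
    = -(PowerSeries.mk fun m => traceFiniteRank (α ^ (m + 1))) * D

/-- For commuting finite-rank endomorphisms `χ, φ, ψ` of a short exact
sequence `0 → U → V → W → 0`, the determinant power series satisfy
`D_φ(z) = D_χ(z)·D_ψ(z)` in `ℝ[[z]]`. -/
theorem det_series_multiplicative_of_ses
    (U V W : Type*) [AddCommGroup U] [Module ℝ U] [AddCommGroup V] [Module ℝ V]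
    [AddCommGroup W] [Module ℝ W]
    (i : U →ₗ[ℝ] V) (p : V →ₗ[ℝ] W)
    (hi : Function.Injective i) (hp : Function.Surjective p)
    (hexact : LinearMap.range i = LinearMap.ker p)
    (χ : U →ₗ[ℝ] U) (φ : V →ₗ[ℝ] V) (ψ : W →ₗ[ℝ] W)
    (hcomm₁ : φ ∘ₗ i = i ∘ₗ χ) (hcomm₂ : p ∘ₗ φ = ψ ∘ₗ p)
    (hχ : FiniteDimensional ℝ (LinearMap.range χ))
    (hφ : FiniteDimensional ℝ (LinearMap.range φ))
    (hψ : FiniteDimensional ℝ (LinearMap.range ψ))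
    (Dχ Dφ Dψ : PowerSeries ℝ)
    (hDχ : IsDetSeries χ Dχ) (hDφ : IsDetSeries φ Dφ) (hDψ : IsDetSeries ψ Dψ) :
    Dφ = Dχ * Dψ := by

  have hc₁ : ∀ u, φ (i u) = i (χ u) := fun u => LinearMap.congr_fun hcomm₁ u
  have hc₂ : ∀ v, p (φ v) = ψ (p v) := fun v => LinearMap.congr_fun hcomm₂ v
  have hcommpow₁ : ∀ n : ℕ, (φ ^ n) ∘ₗ i = i ∘ₗ (χ ^ n) := by
    intro n
    induction n with
    | zero => rw [pow_zero, pow_zero, Module.End.one_eq_id, Module.End.one_eq_id,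
        LinearMap.id_comp, LinearMap.comp_id]
    | succ n ihn =>
      ext u
      simp only [LinearMap.comp_apply, pow_succ, Module.End.mul_apply]
      rw [hc₁ u]
      exact LinearMap.congr_fun ihn (χ u)
  have hcommpow₂ : ∀ n : ℕ, p ∘ₗ (φ ^ n) = (ψ ^ n) ∘ₗ p := by
    intro n
    induction n with
    | zero => rw [pow_zero, pow_zero, Module.End.one_eq_id, Module.End.one_eq_id,
        LinearMap.id_comp, LinearMap.comp_id]
    | succ n ihn =>
      ext v
      simp only [LinearMap.comp_apply, pow_succ, Module.End.mul_apply]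
      have := LinearMap.congr_fun ihn (φ v)
      simp only [LinearMap.comp_apply] at this
      rw [this, hc₂ v]
  have hfinpow : ∀ m : ℕ, FiniteDimensional ℝ (LinearMap.range (φ ^ (m + 1))) := by
    intro m
    have hle : LinearMap.range (φ ^ (m + 1)) ≤ LinearMap.range φ := by
      rw [pow_succ', Module.End.mul_eq_comp]
      exact LinearMap.range_comp_le_range _ _
    exact Submodule.finiteDimensional_of_le hle
  have key : ∀ m : ℕ, traceFiniteRank (φ ^ (m + 1))
      = traceFiniteRank (χ ^ (m + 1)) + traceFiniteRank (ψ ^ (m + 1)) := by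
    intro m
    haveI := hfinpow m
    exact trace_additive i p hi hp hexact (χ ^ (m + 1)) (φ ^ (m + 1)) (ψ ^ (m + 1))
      (hcommpow₁ (m + 1)) (hcommpow₂ (m + 1)) (hfinpow m)
  set Tφ : PowerSeries ℝ := PowerSeries.mk fun m => traceFiniteRank (φ ^ (m + 1)) with hTφ
  set Tχ : PowerSeries ℝ := PowerSeries.mk fun m => traceFiniteRank (χ ^ (m + 1)) with hTχ
  set Tψ : PowerSeries ℝ := PowerSeries.mk fun m => traceFiniteRank (ψ ^ (m + 1)) with hTψ
  have hTsum : Tφ = Tχ + Tψ := by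
    ext m
    simp [hTφ, hTχ, hTψ, PowerSeries.coeff_mk, key m]
  have h0 : PowerSeries.constantCoeff (R := ℝ) (Dχ * Dψ) = 1 := by
    rw [map_mul, hDχ.1, hDψ.1, mul_one]
  have hprod : PowerSeries.derivativeFun (Dχ * Dψ) = -Tφ * (Dχ * Dψ) := by
    rw [PowerSeries.derivativeFun_mul, hDχ.2, hDψ.2, hTsum]
    rw [← hTχ, ← hTψ, smul_eq_mul, smul_eq_mul]
    ring
  exact ode_unique_s5 (-Tφ) Dφ (Dχ * Dψ) hDφ.1 h0 hDφ.2 hprod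
end

section
/- Let φ : V → V be a finite-rank endomorphism of a real vector space, v ∈ V, and ξ ∈ V*. Then there exists an eigenvalue λ of φ (restricted to its image, or λ = 0) such that limsup_{n→∞} |ξ(φ^n(v))|^{1/n} = |λ|. -/
open Filter Polynomial TensorProduct


private lemma natDegree_X_add_one : (X + 1 : ℂ[X]).natDegree = 1 := by compute_degree!

private lemma comp_natDegree (q : ℂ[X]) : (q.comp (X+1)).natDegree = q.natDegree := by
  rw [natDegree_comp, natDegree_X_add_one, mul_one]

private lemma comp_leadingCoeff (q : ℂ[X]) : (q.comp (X+1)).leadingCoeff = q.leadingCoeff := by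
  rw [leadingCoeff_comp (by rw [natDegree_X_add_one]; norm_num)]
  rw [show (X + 1 : ℂ[X]).leadingCoeff = 1 by monicity!, one_pow, mul_one]

/-- the shifted polynomial for the difference operator -/
noncomputable def stepP (lam : ℂ) (q : ℂ → ℂ[X]) : ℂ → ℂ[X] :=
  fun l => l • ((q l).comp (X + 1)) - lam • (q l)

private lemma stepP_eval (lam l : ℂ) (q : ℂ → ℂ[X]) (n : ℕ) :
    (stepP lam q l).eval (n:ℂ) = l * (q l).eval ((n+1:ℕ):ℂ) - lam * (q l).eval (n:ℂ) := by
  simp only [stepP, eval_sub, eval_smul, smul_eq_mul, eval_comp, eval_add, eval_X, eval_one]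
  push_cast; ring

private lemma stepP_zero (lam l : ℂ) (q : ℂ → ℂ[X]) (h : q l = 0) : stepP lam q l = 0 := by
  simp [stepP, h]

private lemma stepP_ne (lam l : ℂ) (q : ℂ → ℂ[X]) (hl : l ≠ lam) (h : q l ≠ 0) :
    stepP lam q l ≠ 0 ∧ (stepP lam q l).natDegree = (q l).natDegree := by
  set d := (q l).natDegree with hd
  have hcoeff : (stepP lam q l).coeff d = (l - lam) * (q l).coeff d := by
    simp only [stepP, coeff_sub, coeff_smul, smul_eq_mul]
    have h1 : ((q l).comp (X+1)).coeff d = (q l).coeff d := by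
      have := comp_leadingCoeff (q l)
      rwa [leadingCoeff, leadingCoeff, comp_natDegree] at this
    rw [h1]; ring
  have hne : (stepP lam q l).coeff d ≠ 0 := by
    rw [hcoeff]
    exact mul_ne_zero (sub_ne_zero.mpr hl) (by rwa [hd, ← leadingCoeff, leadingCoeff_ne_zero])
  have hle : (stepP lam q l).natDegree ≤ d := by
    refine le_trans (natDegree_sub_le _ _) ?_
    refine max_le (le_trans (natDegree_smul_le _ _) ?_) (le_trans (natDegree_smul_le _ _) le_rfl)
    rw [comp_natDegree]
  exact ⟨fun h0 => hne (by simp [h0]), le_antisymm hle (le_natDegree_of_ne_zero hne)⟩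

private lemma stepP_same (l : ℂ) (q : ℂ → ℂ[X]) :
    ∀ m, (q l).natDegree ≤ m → (stepP l q l).coeff m = 0 := by
  intro m hm
  simp only [stepP, coeff_sub, coeff_smul, smul_eq_mul]
  rcases lt_or_eq_of_le hm with hm' | hm'
  · rw [coeff_eq_zero_of_natDegree_lt (by rwa [comp_natDegree]),
      coeff_eq_zero_of_natDegree_lt hm']
    ring
  · have h1 : ((q l).comp (X+1)).coeff m = (q l).coeff m := by
      have := comp_leadingCoeff (q l)
      rw [leadingCoeff, leadingCoeff, comp_natDegree, hm'] at this
      exact this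
    rw [h1]; ring

/-- a polynomial invariant under shifting by one is constant -/
private lemma natDegree_eq_zero_of_comp_eq (q : ℂ[X]) (h : q.comp (X+1) = q) :
    q.natDegree = 0 := by
  have hev : ∀ n : ℕ, q.eval (n:ℂ) = q.eval 0 := by
    intro n
    induction n with
    | zero => norm_num
    | succ k ih =>
      have := congrArg (eval (k:ℂ)) h
      rw [eval_comp] at this
      simp only [eval_add, eval_X, eval_one] at this
      rw [← ih, ← this]; push_cast; ring
  have : q - C (q.eval 0) = 0 := by
    apply eq_zero_of_infinite_isRoot
    apply Set.Infinite.mono (s := Set.range ((↑) : ℕ → ℂ))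
    · rintro x ⟨n, rfl⟩
      simp [IsRoot, hev n]
    · exact Set.infinite_range_of_injective Nat.cast_injective
  have hq : q = C (q.eval 0) := by linear_combination (norm := ring_nf) this
  rw [hq, natDegree_C]

noncomputable def pmeas (S : Finset ℂ) (p : ℂ → ℂ[X]) : ℕ :=
  ∑ l ∈ S, (if p l = 0 then 0 else (p l).natDegree + 1)

private lemma geom_absurd {α C s r : ℝ} (hα : 0 < α) (hs : 0 < s) (hr : s < r) (N : ℕ)
    (h : ∀ n ≥ N, α * r ^ n ≤ C * s ^ n) : False := by
  have ht : 1 < r / s := (one_lt_div hs).mpr hr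
  have := tendsto_pow_atTop_atTop_of_one_lt ht
  obtain ⟨n, hn1, hn2⟩ := ((this.eventually_gt_atTop (C / α)).and (eventually_ge_atTop N)).exists
  have hb := h n hn2
  have hrn : (0:ℝ) < s ^ n := pow_pos hs n
  rw [div_pow] at hn1
  have := (div_lt_div_iff₀ hα hrn).mp hn1
  linarith

private lemma key_lemma (s : ℝ) (hs : 0 < s) :
    ∀ m : ℕ, ∀ S : Finset ℂ, (0:ℂ) ∉ S → ∀ p : ℂ → ℂ[X], pmeas S p ≤ m →
    ∀ c : ℕ → ℂ, ∀ N : ℕ, ∀ Cb : ℝ,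
    (∀ n ≥ N, c n = ∑ l ∈ S, (p l).eval (n:ℂ) * l ^ n) →
    (∀ n ≥ N, ‖c n‖ ≤ Cb * s ^ n) →
    ∀ μ ∈ S, s < ‖μ‖ → p μ = 0 := by
  intro m
  induction m using Nat.strong_induction_on with
  | _ m IH =>
    intro S hS0 p hmeas c N Cb hrep hbd μ hμS hsμ
    by_contra hpμ
    -- choose lam
    by_cases hex : ∃ l ∈ S, l ≠ μ ∧ p l ≠ 0
    case neg =>
      -- all other polys vanish
      have hcollapse : ∀ n ≥ N, c n = (p μ).eval (n:ℂ) * μ ^ n := by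
        intro n hn
        rw [hrep n hn]
        refine Finset.sum_eq_single_of_mem μ hμS ?_
        intro l hl hlμ
        have : p l = 0 := by
          by_contra h'
          exact hex ⟨l, hl, hlμ, h'⟩
        simp [this]
      by_cases hd : (p μ).natDegree = 0
      · -- base case: p μ = const ≠ 0
        obtain ⟨a, ha⟩ : ∃ a, p μ = C a := ⟨(p μ).coeff 0, (eq_C_of_natDegree_eq_zero hd)⟩
        have ha0 : a ≠ 0 := fun h => hpμ (by rw [ha, h, map_zero])
        refine geom_absurd (α := ‖a‖) (C := Cb) (norm_pos_iff.mpr ha0) hs hsμ N ?_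
        intro n hn
        have := hbd n hn
        rw [hcollapse n hn, ha, eval_C] at this
        calc ‖a‖ * ‖μ‖ ^ n = ‖a * μ ^ n‖ := by rw [norm_mul, norm_pow]
        _ ≤ Cb * s ^ n := this
      · -- apply step with lam = μ
        have hd1 : 1 ≤ (p μ).natDegree := Nat.one_le_iff_ne_zero.mpr hd
        set p' := stepP μ p with hp'
        set c' : ℕ → ℂ := fun n => c (n+1) - μ * c n with hc'
        have hmeas' : pmeas S p' < m := by
          have hlt : (if p' μ = 0 then 0 else (p' μ).natDegree + 1)
              < (if p μ = 0 then 0 else (p μ).natDegree + 1) := by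
            rw [if_neg hpμ]
            by_cases h0 : p' μ = 0
            · rw [if_pos h0]; omega
            · rw [if_neg h0]
              have : (p' μ).natDegree ≤ (p μ).natDegree - 1 := by
                rw [natDegree_le_iff_coeff_eq_zero]
                intro k hk
                exact stepP_same μ p k (by omega)
              omega
          have hle : ∀ l ∈ S, (if p' l = 0 then 0 else (p' l).natDegree + 1)
              ≤ (if p l = 0 then 0 else (p l).natDegree + 1) := by
            intro l hl
            by_cases h0 : p l = 0
            · rw [if_pos h0, if_pos (stepP_zero μ l p h0)]
            · by_cases h1 : p' l = 0
              · rw [if_pos h1]; omega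
              · rw [if_neg h0, if_neg h1]
                by_cases hlμ : l = μ
                · subst hlμ
                  have : (p' l).natDegree ≤ (p l).natDegree - 1 := by
                    rw [natDegree_le_iff_coeff_eq_zero]
                    intro k hk
                    refine stepP_same l p k (by omega)
                  omega
                · rw [(stepP_ne μ l p hlμ h0).2]
          calc pmeas S p' < pmeas S p :=
                Finset.sum_lt_sum hle ⟨μ, hμS, hlt⟩
          _ ≤ m := hmeas
        have hrep' : ∀ n ≥ N, c' n = ∑ l ∈ S, (p' l).eval (n:ℂ) * l ^ n := by
          intro n hn
          rw [hc']
          simp only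
          rw [hrep n hn, hrep (n+1) (by omega), Finset.mul_sum, ← Finset.sum_sub_distrib]
          refine Finset.sum_congr rfl ?_
          intro l hl
          rw [stepP_eval]
          push_cast
          ring
        have hbd' : ∀ n ≥ N, ‖c' n‖ ≤ (Cb * (s + ‖μ‖)) * s ^ n := by
          intro n hn
          calc ‖c' n‖ ≤ ‖c (n+1)‖ + ‖μ * c n‖ := norm_sub_le _ _
          _ ≤ Cb * s ^ (n+1) + ‖μ‖ * (Cb * s ^ n) := by
              refine add_le_add (hbd (n+1) (by omega)) ?_
              rw [norm_mul]
              exact mul_le_mul_of_nonneg_left (hbd n hn) (norm_nonneg μ)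
          _ = (Cb * (s + ‖μ‖)) * s ^ n := by ring
        have := IH (pmeas S p') hmeas' S hS0 p' le_rfl c' N _ hrep' hbd' μ hμS hsμ
        -- p' μ = 0 → comp = p μ → degree 0, contradiction
        have hμ0 : μ ≠ 0 := fun h => hS0 (h ▸ hμS)
        have hcomp : (p μ).comp (X + 1) = p μ := by
          have h2 : μ • ((p μ).comp (X+1)) = μ • (p μ) := by
            have := sub_eq_zero.mp this
            exact this
          exact smul_right_injective _ hμ0 h2
        exact hd (natDegree_eq_zero_of_comp_eq _ hcomp)
    case pos =>
      obtain ⟨lam, hlamS, hlamμ, hplam⟩ := hex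
      set p' := stepP lam p with hp'
      set c' : ℕ → ℂ := fun n => c (n+1) - lam * c n with hc'
      have hmeas' : pmeas S p' < m := by
        have hlt : (if p' lam = 0 then 0 else (p' lam).natDegree + 1)
            < (if p lam = 0 then 0 else (p lam).natDegree + 1) := by
          rw [if_neg hplam]
          by_cases h0 : p' lam = 0
          · rw [if_pos h0]; omega
          · rw [if_neg h0]
            have hd1 : 1 ≤ (p lam).natDegree := by
              by_contra hd
              -- degree 0: then stepP_same forces p' lam = 0
              have hdeg : (p lam).natDegree = 0 := by omega
              apply h0
              ext k
              rcases Nat.eq_zero_or_pos k with rfl | hk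
              · simpa using stepP_same lam p 0 (by omega)
              · simpa using stepP_same lam p k (by omega)
            have : (p' lam).natDegree ≤ (p lam).natDegree - 1 := by
              rw [natDegree_le_iff_coeff_eq_zero]
              intro k hk
              exact stepP_same lam p k (by omega)
            omega
        have hle : ∀ l ∈ S, (if p' l = 0 then 0 else (p' l).natDegree + 1)
            ≤ (if p l = 0 then 0 else (p l).natDegree + 1) := by
          intro l hl
          by_cases h0 : p l = 0
          · rw [if_pos h0, if_pos (stepP_zero lam l p h0)]
          · by_cases h1 : p' l = 0
            · rw [if_pos h1]; omega
            · rw [if_neg h0, if_neg h1]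
              by_cases hllam : l = lam
              · subst hllam
                have : (p' l).natDegree ≤ (p l).natDegree - 1 := by
                  rw [natDegree_le_iff_coeff_eq_zero]
                  intro k hk
                  exact stepP_same l p k (by omega)
                omega
              · rw [(stepP_ne lam l p hllam h0).2]
        calc pmeas S p' < pmeas S p := Finset.sum_lt_sum hle ⟨lam, hlamS, hlt⟩
        _ ≤ m := hmeas
      have hrep' : ∀ n ≥ N, c' n = ∑ l ∈ S, (p' l).eval (n:ℂ) * l ^ n := by
        intro n hn
        rw [hc']
        simp only
        rw [hrep n hn, hrep (n+1) (by omega), Finset.mul_sum, ← Finset.sum_sub_distrib]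
        refine Finset.sum_congr rfl ?_
        intro l hl
        rw [stepP_eval]
        push_cast
        ring
      have hbd' : ∀ n ≥ N, ‖c' n‖ ≤ (Cb * (s + ‖lam‖)) * s ^ n := by
        intro n hn
        calc ‖c' n‖ ≤ ‖c (n+1)‖ + ‖lam * c n‖ := norm_sub_le _ _
        _ ≤ Cb * s ^ (n+1) + ‖lam‖ * (Cb * s ^ n) := by
            refine add_le_add (hbd (n+1) (by omega)) ?_
            rw [norm_mul]
            exact mul_le_mul_of_nonneg_left (hbd n hn) (norm_nonneg lam)
        _ = (Cb * (s + ‖lam‖)) * s ^ n := by ring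
      have := IH (pmeas S p') hmeas' S hS0 p' le_rfl c' N _ hrep' hbd' μ hμS hsμ
      exact (stepP_ne lam μ p hlamμ.symm hpμ).1 this

private lemma poly_geom (q : ℂ[X]) (x : ℝ) (hx0 : 0 ≤ x) (hx1 : x < 1) :
    Tendsto (fun n : ℕ => ‖q.eval (n:ℂ)‖ * x ^ n) atTop (nhds 0) := by
  have habs : |x| < 1 := by rwa [abs_of_nonneg hx0]
  have hmaj : ∀ n : ℕ, ‖q.eval (n:ℂ)‖ * x ^ n
      ≤ ∑ i ∈ Finset.range (q.natDegree + 1), ‖q.coeff i‖ * ((n:ℝ) ^ i * x ^ n) := by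
    intro n
    have h1 : ‖q.eval (n:ℂ)‖ ≤ ∑ i ∈ Finset.range (q.natDegree + 1), ‖q.coeff i‖ * (n:ℝ) ^ i := by
      rw [eval_eq_sum_range]
      refine le_trans (norm_sum_le _ _) ?_
      refine Finset.sum_le_sum ?_
      intro i _
      rw [norm_mul, norm_pow]
      simp
    calc ‖q.eval (n:ℂ)‖ * x ^ n
        ≤ (∑ i ∈ Finset.range (q.natDegree + 1), ‖q.coeff i‖ * (n:ℝ) ^ i) * x ^ n :=
          mul_le_mul_of_nonneg_right h1 (pow_nonneg hx0 n)
      _ = ∑ i ∈ Finset.range (q.natDegree + 1), ‖q.coeff i‖ * ((n:ℝ) ^ i * x ^ n) := by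
          rw [Finset.sum_mul]; refine Finset.sum_congr rfl fun i _ => by ring
  have hsum : Tendsto (fun n : ℕ => ∑ i ∈ Finset.range (q.natDegree + 1),
      ‖q.coeff i‖ * ((n:ℝ) ^ i * x ^ n)) atTop (nhds 0) := by
    have : Tendsto (fun n : ℕ => ∑ i ∈ Finset.range (q.natDegree + 1),
        ‖q.coeff i‖ * ((n:ℝ) ^ i * x ^ n)) atTop
        (nhds (∑ i ∈ Finset.range (q.natDegree + 1), ‖q.coeff i‖ * 0)) := by
      refine tendsto_finset_sum _ ?_
      intro i _
      exact (tendsto_pow_const_mul_const_pow_of_abs_lt_one i habs).const_mul _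
    simpa using this
  refine squeeze_zero (fun n => by positivity) hmaj hsum

private lemma master (S : Finset ℂ) (hS0 : (0:ℂ) ∉ S) (p : ℂ → ℂ[X])
    (hp : ∀ l ∈ S, p l ≠ 0) (N : ℕ) (c : ℕ → ℂ)
    (hrep : ∀ n ≥ N, c n = ∑ l ∈ S, (p l).eval (n:ℂ) * l ^ n)
    (μ : ℂ) (hμ : μ ∈ S) (hmax : ∀ l ∈ S, ‖l‖ ≤ ‖μ‖) :
    limsup (fun n : ℕ => ‖c n‖ ^ ((n : ℝ)⁻¹)) atTop = ‖μ‖ := by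
  set r := ‖μ‖ with hr
  have hμ0 : μ ≠ 0 := fun h => hS0 (h ▸ hμ)
  have hr0 : 0 < r := norm_pos_iff.mpr hμ0
  set u : ℕ → ℝ := fun n => ‖c n‖ ^ ((n : ℝ)⁻¹) with hu
  have hu0 : ∀ n, 0 ≤ u n := fun n => Real.rpow_nonneg (norm_nonneg _) _
  -- eventual upper bound for any ρ > r
  have hupper : ∀ ρ : ℝ, r < ρ → ∀ᶠ n : ℕ in atTop, u n ≤ ρ := by
    intro ρ hρ
    have hρ0 : 0 < ρ := lt_trans hr0 hρ
    have hg : Tendsto (fun n : ℕ => ∑ l ∈ S, ‖(p l).eval (n:ℂ)‖ * (‖l‖ / ρ) ^ n)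
        atTop (nhds 0) := by
      have : Tendsto (fun n : ℕ => ∑ l ∈ S, ‖(p l).eval (n:ℂ)‖ * (‖l‖ / ρ) ^ n)
          atTop (nhds (∑ l ∈ S, 0)) := by
        refine tendsto_finset_sum _ ?_
        intro l hl
        refine poly_geom _ _ (by positivity) ?_
        rw [div_lt_one hρ0]
        exact lt_of_le_of_lt (hmax l hl) hρ
      simpa using this
    have hcb : ∀ᶠ n : ℕ in atTop, ‖c n‖ ≤ ρ ^ n := by
      have hev : ∀ᶠ n : ℕ in atTop,
          (∑ l ∈ S, ‖(p l).eval (n:ℂ)‖ * (‖l‖ / ρ) ^ n) ≤ 1 :=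
        hg.eventually_le_const (by norm_num)
      filter_upwards [hev, eventually_ge_atTop N] with n h1 h2
      have hbound : ‖c n‖ ≤ ∑ l ∈ S, ‖(p l).eval (n:ℂ)‖ * ‖l‖ ^ n := by
        rw [hrep n h2]
        refine le_trans (norm_sum_le _ _) (Finset.sum_le_sum fun l _ => ?_)
        rw [norm_mul, norm_pow]
      have hρn : (0:ℝ) < ρ ^ n := pow_pos hρ0 n
      have h3 : (∑ l ∈ S, ‖(p l).eval (n:ℂ)‖ * ‖l‖ ^ n) ≤ ρ ^ n := by
        have := mul_le_mul_of_nonneg_right h1 (le_of_lt hρn)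
        rw [one_mul, Finset.sum_mul] at this
        refine le_trans (le_of_eq ?_) this
        refine Finset.sum_congr rfl fun l _ => ?_
        rw [div_pow, mul_assoc, div_mul_eq_mul_div, mul_div_assoc, div_self (ne_of_gt hρn),
          mul_one]
      exact le_trans hbound h3
    filter_upwards [hcb, eventually_ge_atTop 1] with n h1 h2
    calc u n ≤ (ρ ^ n) ^ ((n:ℝ)⁻¹) :=
        Real.rpow_le_rpow (norm_nonneg _) h1 (by positivity)
    _ = ρ := Real.pow_rpow_inv_natCast (le_of_lt hρ0) (by omega)
  -- boundedness
  have hbddabove : IsBoundedUnder (· ≤ ·) atTop u :=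
    isBoundedUnder_of_eventually_le (hupper (r+1) (by linarith))
  have hbddbelow : IsBoundedUnder (· ≥ ·) atTop u :=
    isBoundedUnder_of_eventually_ge (Eventually.of_forall hu0)
  refine le_antisymm ?_ ?_
  · -- limsup ≤ r
    by_contra hcon
    push_neg at hcon
    set ρ := (r + limsup u atTop) / 2 with hρdef
    have h1 : r < ρ := by rw [hρdef]; linarith
    have h2 : ρ < limsup u atTop := by rw [hρdef]; linarith
    have := limsup_le_of_le hbddbelow.isCoboundedUnder_le (hupper ρ h1)
    linarith
  · -- r ≤ limsup
    by_contra hcon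
    push_neg at hcon
    set b := (limsup u atTop + r) / 2 with hbdef
    have hb1 : limsup u atTop < b := by rw [hbdef]; linarith
    have hb2 : b < r := by rw [hbdef]; linarith
    have hev : ∀ᶠ n : ℕ in atTop, u n < b := eventually_lt_of_limsup_lt hb1 hbddabove
    set s : ℝ := max b (r/2) with hsdef
    have hs0 : 0 < s := lt_of_lt_of_le (by linarith) (le_max_right _ _)
    have hsr : s < r := max_lt hb2 (by linarith)
    obtain ⟨N₁, hN₁⟩ := (hev.and (eventually_ge_atTop (max N 1))).exists_forall_of_atTop
    have hbd : ∀ n ≥ max N₁ (max N 1), ‖c n‖ ≤ 1 * s ^ n := by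
      intro n hn
      have h1 : u n < b := (hN₁ n (le_trans (le_max_left _ _) hn)).1
      have hn1 : 1 ≤ n := le_trans (le_max_right _ _) (le_trans (le_max_right _ _) hn)
      have hx : ‖c n‖ = (u n) ^ n :=
        (Real.rpow_inv_natCast_pow (norm_nonneg _) (by omega)).symm
      rw [one_mul, hx]
      exact pow_le_pow_left₀ (hu0 n) (le_trans (le_of_lt h1) (le_max_left _ _)) n
    have hrep' : ∀ n ≥ max N₁ (max N 1), c n = ∑ l ∈ S, (p l).eval (n:ℂ) * l ^ n := by
      intro n hn
      exact hrep n (le_trans (le_trans (le_max_left N 1) (le_max_right _ _)) hn)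
    have := key_lemma s hs0 _ S hS0 p le_rfl c (max N₁ (max N 1)) 1 hrep' hbd μ hμ
      (by rw [← hr]; exact hsr)
    exact hp μ hμ this

set_option maxHeartbeats 1000000 in
/-- For a finite-rank endomorphism `φ` of a real vector space, `v ∈ V` and
`ξ ∈ V*`, there is an eigenvalue `λ` of (the complexification of) `φ` restricted to its
image, or `λ = 0`, such that `limsup |ξ(φⁿ(v))|^{1/n} = |λ|`. -/
theorem limsup_eq_abs_eigenvalue
    (V : Type*) [AddCommGroup V] [Module ℝ V] (φ : V →ₗ[ℝ] V)
    (hfin : FiniteDimensional ℝ (LinearMap.range φ))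
    (v : V) (ξ : V →ₗ[ℝ] ℝ) :
    ∃ μ : ℂ,
      (μ = 0 ∨ Module.End.HasEigenvalue
        (LinearMap.baseChange ℂ (φ.restrict (fun x _ => LinearMap.mem_range_self φ x))) μ) ∧
      Filter.limsup (fun n : ℕ => |ξ ((φ ^ n) v)| ^ ((n : ℝ)⁻¹)) Filter.atTop
        = ‖μ‖ := by
  classical
  set W : Submodule ℝ V := LinearMap.range φ with hW
  haveI : FiniteDimensional ℝ W := hfin
  set ψ : W →ₗ[ℝ] W := φ.restrict (fun x _ => LinearMap.mem_range_self φ x) with hψ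
  set Ψ : Module.End ℂ (ℂ ⊗[ℝ] W) := LinearMap.baseChange ℂ ψ with hΨ
  haveI : FiniteDimensional ℂ (ℂ ⊗[ℝ] ↥W) := inferInstance
  set L : (ℂ ⊗[ℝ] W) →ₗ[ℂ] ℂ :=
    LinearMap.liftBaseChange ℂ (Complex.ofRealAm.toLinearMap ∘ₗ (ξ.comp W.subtype)) with hL
  have hcoe : ∀ (n : ℕ) (w : W), (((ψ^n) w : W) : V) = (φ^n) (w : V) := by
    intro n
    induction n with
    | zero => intro w; simp
    | succ k ih =>
      intro w
      rw [pow_succ', pow_succ', Module.End.mul_apply, Module.End.mul_apply,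
        LinearMap.restrict_coe_apply, ih]
  set w₀ : W := ⟨φ v, LinearMap.mem_range_self φ v⟩ with hw₀
  have hΨpow : ∀ n : ℕ, (Ψ^n) ((1:ℂ) ⊗ₜ[ℝ] w₀) = (1:ℂ) ⊗ₜ[ℝ] ((ψ^n) w₀) := by
    intro n
    rw [hΨ, ← LinearMap.baseChange_pow, LinearMap.baseChange_tmul]
  have hLtmul : ∀ w : W, L ((1:ℂ) ⊗ₜ[ℝ] w) = ((ξ (w:V) : ℝ) : ℂ) := by
    intro w
    rw [hL, LinearMap.liftBaseChange_tmul]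
    simp
  have hkey : ∀ n : ℕ, ((ξ ((φ^(n+1)) v) : ℝ) : ℂ) = L ((Ψ^n) ((1:ℂ) ⊗ₜ[ℝ] w₀)) := by
    intro n
    rw [hΨpow, hLtmul, hcoe]
    have : (φ ^ (n+1)) v = (φ ^ n) (φ v) := by rw [pow_succ, Module.End.mul_apply]
    rw [this]
  obtain ⟨f, hf_mem, hf_sum⟩ := (Submodule.mem_iSup_iff_exists_finsupp _ _).mp
    (show ((1:ℂ) ⊗ₜ[ℝ] w₀) ∈ ⨆ μ : ℂ, Ψ.maxGenEigenspace μ by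
      rw [Module.End.iSup_maxGenEigenspace_eq_top]; trivial)
  choose K hK using fun l => (Module.End.mem_maxGenEigenspace Ψ l (f l)).mp (hf_mem l)
  set D : ℕ := Finset.sup f.support K with hD
  have hKD : ∀ l, ((Ψ - l • 1) ^ D) (f l) = 0 ∨ f l = 0 := by
    intro l
    by_cases hl : l ∈ f.support
    · left
      have h1 : K l ≤ D := Finset.le_sup hl
      rw [show D = (D - K l) + K l by omega, pow_add, Module.End.mul_apply, hK l]
      exact map_zero _
    · right
      exact Finsupp.notMem_support_iff.mp hl
  have hKD' : ∀ l : ℂ, ∀ k : ℕ, D ≤ k → ((Ψ - l • 1) ^ k) (f l) = 0 := by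
    intro l k hk
    rcases hKD l with h | h
    · rw [show k = (k - D) + D by omega, pow_add, Module.End.mul_apply, h]
      exact map_zero _
    · rw [h]; exact map_zero _
  set P : ℂ → ℂ[X] := fun l => ∑ k ∈ Finset.range D,
    (((k.factorial : ℂ))⁻¹ * (l ^ k)⁻¹ * L (((Ψ - l • 1) ^ k) (f l))) • descPochhammer ℂ k
    with hP
  have hrepl : ∀ l : ℂ, l ≠ 0 → ∀ n : ℕ, D ≤ n →
      L ((Ψ ^ n) (f l)) = (P l).eval (n:ℂ) * l ^ n := by
    intro l hl0 n hn
    have hcomm : Commute (Ψ - l • 1) (l • 1) := (Commute.one_right _).smul_right l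
    have hC : ∀ k : ℕ, ((k : ℂ)) • (1 : Module.End ℂ (ℂ ⊗[ℝ] W))
        = (k : Module.End ℂ (ℂ ⊗[ℝ] W)) := by
      intro k
      rw [Nat.cast_smul_eq_nsmul]
      simp
    have hterm : ∀ k : ℕ, (Ψ - l • 1) ^ k * (l • 1) ^ (n - k)
          * ((n.choose k : Module.End ℂ (ℂ ⊗[ℝ] W)))
        = ((n.choose k : ℂ) * l ^ (n - k)) • ((Ψ - l • 1) ^ k) := by
      intro k
      rw [← hC (n.choose k), _root_.smul_pow, one_pow]
      rw [mul_smul_comm, mul_one, mul_smul_comm, mul_one, smul_smul]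
    have hbinom : (Ψ ^ n) (f l) = ∑ k ∈ Finset.range (n+1),
        ((n.choose k : ℂ) * l ^ (n - k)) • (((Ψ - l • 1) ^ k) (f l)) := by
      have h1 : Ψ ^ n = ((Ψ - l • 1) + l • 1) ^ n := by congr 1; abel
      rw [h1, hcomm.add_pow, LinearMap.sum_apply]
      refine Finset.sum_congr rfl fun k hk => ?_
      rw [hterm k, LinearMap.smul_apply]
    rw [hbinom, map_sum]
    have htrunc : ∑ k ∈ Finset.range (n+1),
        L (((n.choose k : ℂ) * l ^ (n - k)) • (((Ψ - l • 1) ^ k) (f l)))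
        = ∑ k ∈ Finset.range D,
        L (((n.choose k : ℂ) * l ^ (n - k)) • (((Ψ - l • 1) ^ k) (f l))) := by
      refine (Finset.sum_subset (Finset.range_subset_range.mpr (by omega)) ?_).symm
      intro k _ hk2
      rw [hKD' l k (by simpa using hk2)]
      simp
    rw [htrunc, hP]
    rw [eval_finset_sum, Finset.sum_mul]
    refine Finset.sum_congr rfl fun k hk => ?_
    rw [map_smul, smul_eq_mul, eval_smul, smul_eq_mul, descPochhammer_eval_eq_descFactorial,
      show ((n.descFactorial k : ℂ)) = (k.factorial : ℂ) * (n.choose k : ℂ) by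
        rw [Nat.descFactorial_eq_factorial_mul_choose]; push_cast; ring]
    have hkn : k ≤ n := by
      have := Finset.mem_range.mp hk; omega
    have hpow : l ^ (n - k) = l ^ n / l ^ k := pow_sub₀ l hl0 hkn
    have hfact : (k.factorial : ℂ) ≠ 0 := Nat.cast_ne_zero.mpr k.factorial_ne_zero
    have hlk : (l:ℂ) ^ k ≠ 0 := pow_ne_zero _ hl0
    rw [hpow]
    field_simp
  set c : ℕ → ℂ := fun n => ((ξ ((φ^n) v) : ℝ) : ℂ) with hc
  have hL0 : ∀ n : ℕ, D ≤ n → (Ψ ^ n) (f 0) = 0 := by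
    intro n hn
    have h := hKD' 0 n hn
    rw [show Ψ - (0:ℂ) • 1 = Ψ by rw [zero_smul]; exact sub_zero Ψ] at h
    exact h
  set s' : Finset ℂ := f.support.erase 0 with hs'
  have hglob : ∀ n : ℕ, D + 1 ≤ n →
      c n = ∑ l ∈ s', ((P l).eval (((n-1:ℕ)):ℂ)) * l ^ (n-1) := by
    intro n hn
    obtain ⟨m, rfl⟩ : ∃ m, n = m + 1 := ⟨n - 1, by omega⟩
    have hm : D ≤ m := by omega
    have hc1 : c (m+1) = L ((Ψ ^ m) ((1:ℂ) ⊗ₜ[ℝ] w₀)) := hkey m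
    have hsplit : L ((Ψ ^ m) ((1:ℂ) ⊗ₜ[ℝ] w₀)) = ∑ l ∈ f.support, L ((Ψ ^ m) (f l)) := by
      rw [← hf_sum, Finsupp.sum, map_sum, map_sum]
    have hsub : s' ⊆ f.support := Finset.erase_subset _ _
    have hvan : ∀ x ∈ f.support, x ∉ s' → L ((Ψ ^ m) (f x)) = 0 := by
      intro x hx hxs
      have hx0 : x = 0 := by
        by_contra hx0
        exact hxs (Finset.mem_erase.mpr ⟨hx0, hx⟩)
      rw [hx0, hL0 m hm, map_zero]
    rw [hc1, hsplit, ← Finset.sum_subset hsub hvan]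
    refine Finset.sum_congr rfl fun l hl => ?_
    have hl0 : l ≠ 0 := (Finset.mem_erase.mp hl).1
    rw [hrepl l hl0 m hm]
    congr 2 <;> omega
  set Q : ℂ → ℂ[X] := fun l => l⁻¹ • ((P l).comp (X - 1)) with hQ
  have hQrep : ∀ n : ℕ, n ≥ D + 1 → c n = ∑ l ∈ s', (Q l).eval (n:ℂ) * l ^ n := by
    intro n hn
    rw [hglob n hn]
    refine Finset.sum_congr rfl fun l hl => ?_
    have hl0 : l ≠ 0 := (Finset.mem_erase.mp hl).1
    rw [hQ]
    simp only [eval_smul, smul_eq_mul, eval_comp, eval_sub, eval_X, eval_one]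
    have hcast : ((n:ℂ) - 1) = (((n - 1 : ℕ)):ℂ) := by
      have h1 : 1 ≤ n := by omega
      rw [Nat.cast_sub h1]
      norm_num
    rw [hcast]
    obtain ⟨m, rfl⟩ : ∃ m, n = m + 1 := ⟨n - 1, by omega⟩
    have hmm : m + 1 - 1 = m := by omega
    rw [hmm, pow_succ]
    field_simp
  set T : Finset ℂ := s'.filter (fun l => Q l ≠ 0) with hT
  have hTrep : ∀ n : ℕ, n ≥ D + 1 → c n = ∑ l ∈ T, (Q l).eval (n:ℂ) * l ^ n := by
    intro n hn
    rw [hQrep n hn, hT]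
    refine (Finset.sum_filter_of_ne ?_).symm
    intro x _ hne
    intro hQx
    rw [hQx] at hne
    simp at hne
  by_cases hTne : T.Nonempty
  · obtain ⟨μ, hμT, hμmax⟩ := T.exists_max_image (fun l => ‖l‖) hTne
    have hQμ : Q μ ≠ 0 := (Finset.mem_filter.mp hμT).2
    have hμs' : μ ∈ s' := (Finset.mem_filter.mp hμT).1
    have hμ0 : μ ≠ 0 := (Finset.mem_erase.mp hμs').1
    have hPμ : P μ ≠ 0 := by
      intro h
      apply hQμ
      rw [hQ]
      simp only
      rw [h, zero_comp, smul_zero]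
    have hfμ : f μ ≠ 0 := by
      intro h
      apply hPμ
      rw [hP]
      simp only
      refine Finset.sum_eq_zero fun k _ => ?_
      rw [h, map_zero, map_zero, mul_zero, zero_smul]
    refine ⟨μ, Or.inr ?_, ?_⟩
    · refine Module.End.hasEigenvalue_of_hasGenEigenvalue
        (k := K μ) (Module.End.hasGenEigenvalue_iff.mpr ?_)
      rw [Submodule.ne_bot_iff]
      exact ⟨f μ, Module.End.mem_genEigenspace_nat.mpr (hK μ), hfμ⟩
    · have h0T : (0:ℂ) ∉ T := fun h =>
        (Finset.mem_erase.mp (Finset.mem_filter.mp h).1).1 rfl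
      have hm := master T h0T Q (fun l hl => (Finset.mem_filter.mp hl).2) (D+1) c hTrep μ hμT
        (fun l hl => hμmax l hl)
      rw [← hm]
      refine Filter.limsup_congr (Filter.Eventually.of_forall fun n => ?_)
      rw [hc]
      simp only
      rw [Complex.norm_real, Real.norm_eq_abs]
  · refine ⟨0, Or.inl rfl, ?_⟩
    have hzero : ∀ᶠ n : ℕ in atTop, |ξ ((φ^n) v)| ^ ((n:ℝ)⁻¹) = 0 := by
      filter_upwards [eventually_ge_atTop (D+1)] with n hn
      have hcn : c n = 0 := by
        rw [hTrep n hn, Finset.not_nonempty_iff_eq_empty.mp hTne, Finset.sum_empty]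
      have habs : |ξ ((φ^n) v)| = 0 := by
        rw [hc] at hcn
        simp only at hcn
        rw [Complex.ofReal_eq_zero.mp hcn]
        exact abs_zero
      rw [habs]
      exact Real.zero_rpow (by
        simp only [ne_eq, inv_eq_zero, Nat.cast_eq_zero]
        omega)
    rw [Filter.limsup_congr hzero]
    simp [Filter.limsup_const]
end

section
/- Let φ : V → V be a finite-rank endomorphism, v ∈ V, ξ ∈ V*, with ρ := limsup_{n→∞} |ξ(φ^n(v))|^{1/n} > 0. Then the power series D_φ(z) = exp(−Σ_{n≥1} tr(φ^n) z^n/n), equal to the polynomial det(Id − zM) where M is any matrix representing φ as in Proposition ap1, has a zero z₀ with |z₀| = 1/ρ. -/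
open Polynomial Finset Matrix Filter
open scoped ENNReal NNReal

section auxs

lemma aux_poly_mul_tsum (Dp : Polynomial ℂ) (a : ℕ → ℂ) (z : ℂ)
    (ha : Summable fun n => ‖a n * z ^ n‖) :
    Dp.eval z * ∑' n, a n * z ^ n
      = ∑' m, (∑ j ∈ Finset.range (m + 1), Dp.coeff j * a (m - j)) * z ^ m := by
  set f : ℕ → ℂ := fun j => Dp.coeff j * z ^ j with hfdef
  have hf : Summable fun j => ‖f j‖ := by
    apply summable_of_ne_finset_zero (s := Finset.range (Dp.natDegree + 1))
    intro j hj
    simp only [Finset.mem_range, not_lt] at hj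
    have : Dp.coeff j = 0 := Polynomial.coeff_eq_zero_of_natDegree_lt (by omega)
    simp [hfdef, this]
  have hev : Dp.eval z = ∑' j, f j := by
    rw [tsum_eq_sum (s := Finset.range (Dp.natDegree + 1))]
    · exact Polynomial.eval_eq_sum_range _
    · intro j hj
      simp only [Finset.mem_range, not_lt] at hj
      have : Dp.coeff j = 0 := Polynomial.coeff_eq_zero_of_natDegree_lt (by omega)
      simp [hfdef, this]
  rw [hev, tsum_mul_tsum_eq_tsum_sum_range_of_summable_norm hf ha]
  congr 1
  funext m
  rw [Finset.sum_mul]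
  apply Finset.sum_congr rfl
  intro j hj
  simp only [Finset.mem_range] at hj
  have : z ^ j * z ^ (m - j) = z ^ m := by
    rw [← pow_add]; congr 1; omega
  simp only [hfdef]
  rw [mul_mul_mul_comm, this]


lemma aux_rec (k : ℕ) (M : Matrix (Fin k) (Fin k) ℂ) (c u : Fin k → ℂ) (a : ℕ → ℂ)
    (hA : ∀ n, a (n + 1) = c ⬝ᵥ (M ^ n).mulVec u)
    (m : ℕ) (hm : k + 1 ≤ m) :
    ∑ j ∈ Finset.range (m + 1), M.charpolyRev.coeff j * a (m - j) = 0 := by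
  have hcard : Fintype.card (Fin k) = k := Fintype.card_fin k
  have hdegχ : M.charpoly.natDegree = k := by
    rw [Matrix.charpoly_natDegree_eq_dim, hcard]
  have hDrev : M.charpolyRev = M.charpoly.reverse := (Matrix.reverse_charpoly M).symm
  have hdegD : M.charpolyRev.natDegree ≤ k := by
    rw [hDrev]; exact le_trans (Polynomial.reverse_natDegree_le _) (le_of_eq hdegχ)
  have hcoeff : ∀ j ≤ k, M.charpolyRev.coeff j = M.charpoly.coeff (k - j) := by
    intro j hj
    rw [hDrev, Polynomial.coeff_reverse, hdegχ, Polynomial.revAt_le hj]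
  -- restrict to range (k+1)
  rw [← Finset.sum_subset (Finset.range_subset_range.mpr (by omega : k + 1 ≤ m + 1))
    (by intro j _ hj
        simp only [Finset.mem_range, not_lt] at hj
        have : M.charpolyRev.coeff j = 0 :=
          Polynomial.coeff_eq_zero_of_natDegree_lt (by omega)
        simp [this])]
  set y : Fin k → ℂ := (M ^ (m - k - 1)).mulVec u with hy
  have hterm : ∀ j ∈ Finset.range (k + 1),
      M.charpolyRev.coeff j * a (m - j)
        = c ⬝ᵥ ((M.charpoly.coeff (k - j) • M ^ (k - j)).mulVec y) := by
    intro j hj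
    simp only [Finset.mem_range] at hj
    have h1 : m - j = (m - j - 1) + 1 := by omega
    rw [h1, hA, hcoeff j (by omega)]
    have h2 : M ^ (m - j - 1) = M ^ (k - j) * M ^ (m - k - 1) := by
      rw [← pow_add]; congr 1; omega
    rw [h2, ← Matrix.mulVec_mulVec, hy, Matrix.smul_mulVec,
      dotProduct_smul, smul_eq_mul]
  rw [Finset.sum_congr rfl hterm]
  have lin : ∀ (g : ℕ → Matrix (Fin k) (Fin k) ℂ),
      ∑ j ∈ Finset.range (k + 1), c ⬝ᵥ (g j).mulVec y
        = c ⬝ᵥ (∑ j ∈ Finset.range (k + 1), g j).mulVec y := by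
    intro g
    induction (Finset.range (k + 1)) using Finset.cons_induction with
    | empty => simp
    | cons j S hj ih => simp [Finset.sum_cons, Finset.sum_insert hj, Matrix.add_mulVec, dotProduct_add, ih]
  rw [lin]
  have key : (∑ j ∈ Finset.range (k + 1), M.charpoly.coeff (k - j) • M ^ (k - j)) = 0 := by
    have hCH := Matrix.aeval_self_charpoly M
    rw [Polynomial.aeval_eq_sum_range, hdegχ] at hCH
    rw [← hCH]
    have := Finset.sum_range_reflect (fun i => M.charpoly.coeff i • M ^ i) (k + 1)
    simpa using this
  rw [key]
  simp


lemma aux_eval_charpolyRev {k : ℕ} (M : Matrix (Fin k) (Fin k) ℂ) (z : ℂ) :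
    M.charpolyRev.eval z = ((1 : Matrix (Fin k) (Fin k) ℂ) - z • M).det := by
  rw [Matrix.charpolyRev, ← Polynomial.coe_evalRingHom, RingHom.map_det]
  congr 1
  ext i j
  rcases eq_or_ne i j with rfl | hij
  · simp [Matrix.one_apply, Matrix.map_apply]
    ring
  · simp [Matrix.one_apply, hij, Matrix.map_apply]
    ring


end auxs

lemma aux_rpow_pow (x : ℝ) (hx : 0 ≤ x) (n : ℕ) (hn : n ≠ 0) :
    (x ^ n) ^ ((n : ℝ)⁻¹) = x := by
  rw [← Real.rpow_natCast x n, ← Real.rpow_mul hx,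
    mul_inv_cancel₀ (by exact_mod_cast hn), Real.rpow_one]

set_option maxHeartbeats 1000000 in
/-- Let `φ = Σ ωᵢ ⊗ vᵢ` be a finite-rank endomorphism, `v ∈ V`, `ξ ∈ V*`,
and suppose `ρ := limsup |ξ(φⁿ(v))|^{1/n} > 0`.  Then the polynomial
`D_φ(z) = det(Id − z·M)`, with `M i j = ωᵢ(vⱼ)`, has a (complex) zero `z₀` with
`|z₀| = 1/ρ`. -/
theorem det_series_has_zero_of_limsup_pos
    (V : Type*) [AddCommGroup V] [Module ℝ V] (k : ℕ)
    (ω : Fin k → (V →ₗ[ℝ] ℝ)) (v : Fin k → V) (φ : V →ₗ[ℝ] V)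
    (hφ : φ = ∑ i, (ω i).smulRight (v i))
    (w : V) (ξ : V →ₗ[ℝ] ℝ) (ρ : ℝ)
    (hρ : ρ = Filter.limsup (fun n : ℕ => |ξ ((φ ^ n) w)| ^ ((n : ℝ)⁻¹)) Filter.atTop)
    (hρpos : 0 < ρ) :
    ∃ z₀ : ℂ, ‖z₀‖ = 1 / ρ ∧
      Matrix.det ((1 : Matrix (Fin k) (Fin k) ℂ)
        - z₀ • Matrix.of fun i j => (ω i (v j) : ℂ)) = 0 := by
  by_contra hcon
  push_neg at hcon
  set Mc : Matrix (Fin k) (Fin k) ℂ := Matrix.of fun i j => ((ω i (v j) : ℝ) : ℂ) with hMc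
  set a : ℕ → ℂ := fun n => ((ξ ((φ ^ n) w) : ℝ) : ℂ) with ha
  set cc : Fin k → ℂ := fun j => ((ξ (v j) : ℝ) : ℂ) with hcc
  set uc : Fin k → ℂ := fun i => ((ω i w : ℝ) : ℂ) with huc
  set u : ℕ → ℝ := fun n : ℕ => |ξ ((φ ^ n) w)| ^ ((n : ℝ)⁻¹) with hu
  -- basic recurrences
  have hφx : ∀ x : V, φ x = ∑ i, ω i x • v i := by
    intro x; rw [hφ]; simp [LinearMap.sum_apply]
  have hωφ : ∀ x : V, (fun i => ((ω i (φ x) : ℝ) : ℂ))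
      = Mc.mulVec (fun j => ((ω j x : ℝ) : ℂ)) := by
    intro x
    funext i
    rw [hφx]
    simp only [map_sum, _root_.map_smul, smul_eq_mul, Matrix.mulVec, dotProduct, hMc,
      Matrix.of_apply]
    push_cast
    exact Finset.sum_congr rfl (fun j _ => by ring)
  have hξφ : ∀ x : V, ((ξ (φ x) : ℝ) : ℂ) = cc ⬝ᵥ (fun j => ((ω j x : ℝ) : ℂ)) := by
    intro x
    rw [hφx]
    simp only [map_sum, _root_.map_smul, smul_eq_mul, dotProduct, hcc]
    push_cast
    exact Finset.sum_congr rfl (fun j _ => by ring)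
  have hvec : ∀ n : ℕ, (fun i => ((ω i ((φ ^ n) w) : ℝ) : ℂ)) = (Mc ^ n).mulVec uc := by
    intro n
    induction n with
    | zero => simp [huc]
    | succ n ih =>
      have hstep : (φ ^ (n + 1)) w = φ ((φ ^ n) w) := by
        rw [pow_succ']; rfl
      rw [hstep, hωφ ((φ ^ n) w), ih, Matrix.mulVec_mulVec, ← pow_succ']
  have hA : ∀ n : ℕ, a (n + 1) = cc ⬝ᵥ (Mc ^ n).mulVec uc := by
    intro n
    have hstep : (φ ^ (n + 1)) w = φ ((φ ^ n) w) := by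
      rw [pow_succ']; rfl
    rw [ha]
    simp only
    rw [hstep, hξφ ((φ ^ n) w), hvec n]
  -- growth bound on a
  have hgrowth : ∃ K L : ℝ, 1 ≤ K ∧ 1 ≤ L ∧ ∀ n, ‖a n‖ ≤ K * L ^ n := by
    set Cs : ℝ := ∑ j : Fin k, ‖cc j‖ with hCs
    have hCs0 : 0 ≤ Cs := Finset.sum_nonneg fun j _ => norm_nonneg _
    set L : ℝ := 1 + ∑ i : Fin k, ∑ j : Fin k, ‖Mc i j‖ with hL
    have hL1 : (1:ℝ) ≤ L :=
      le_add_of_nonneg_right (Finset.sum_nonneg fun i _ =>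
        Finset.sum_nonneg fun j _ => norm_nonneg _)
    have hL0 : (0:ℝ) ≤ L := le_trans zero_le_one hL1
    have hmv : ∀ x : Fin k → ℂ, ‖Mc.mulVec x‖ ≤ L * ‖x‖ := by
      intro x
      rw [pi_norm_le_iff_of_nonneg (mul_nonneg hL0 (norm_nonneg x))]
      intro i
      calc ‖Mc.mulVec x i‖ = ‖∑ j, Mc i j * x j‖ := by
            congr 1
        _ ≤ ∑ j, ‖Mc i j * x j‖ := norm_sum_le _ _
        _ ≤ ∑ j, ‖Mc i j‖ * ‖x‖ := by
            apply Finset.sum_le_sum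
            intro j _
            rw [norm_mul]
            exact mul_le_mul_of_nonneg_left (norm_le_pi_norm x j) (norm_nonneg _)
        _ = (∑ j, ‖Mc i j‖) * ‖x‖ := (Finset.sum_mul _ _ _).symm
        _ ≤ L * ‖x‖ := by
            apply mul_le_mul_of_nonneg_right _ (norm_nonneg x)
            rw [hL]
            have h1 : (∑ j, ‖Mc i j‖)
                ≤ ∑ i : Fin k, ∑ j : Fin k, ‖Mc i j‖ :=
              Finset.single_le_sum
                (f := fun i => ∑ j : Fin k, ‖Mc i j‖)
                (fun i _ => Finset.sum_nonneg fun j _ => norm_nonneg _)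
                (Finset.mem_univ i)
            linarith
    have hMn : ∀ n : ℕ, ‖(Mc ^ n).mulVec uc‖ ≤ L ^ n * ‖uc‖ := by
      intro n
      induction n with
      | zero => simp [Matrix.one_mulVec]
      | succ n ih =>
        have h1 : (Mc ^ (n + 1)).mulVec uc = Mc.mulVec ((Mc ^ n).mulVec uc) := by
          rw [pow_succ', Matrix.mulVec_mulVec]
        rw [h1]
        calc ‖Mc.mulVec ((Mc ^ n).mulVec uc)‖ ≤ L * ‖(Mc ^ n).mulVec uc‖ := hmv _
          _ ≤ L * (L ^ n * ‖uc‖) := by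
              exact mul_le_mul_of_nonneg_left ih hL0
          _ = L ^ (n + 1) * ‖uc‖ := by ring
    have hdot : ∀ y : Fin k → ℂ, ‖cc ⬝ᵥ y‖ ≤ Cs * ‖y‖ := by
      intro y
      calc ‖cc ⬝ᵥ y‖ ≤ ∑ j, ‖cc j * y j‖ := norm_sum_le _ _
        _ ≤ ∑ j, ‖cc j‖ * ‖y‖ := by
            apply Finset.sum_le_sum
            intro j _
            rw [norm_mul]
            exact mul_le_mul_of_nonneg_left (norm_le_pi_norm y j) (norm_nonneg _)
        _ = Cs * ‖y‖ := by rw [hCs, Finset.sum_mul]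
    refine ⟨‖a 0‖ + Cs * ‖uc‖ + 1, L, ?_, hL1, ?_⟩
    · have := norm_nonneg (a 0)
      have := mul_nonneg hCs0 (norm_nonneg uc)
      linarith
    · intro n
      match n with
      | 0 =>
        have := mul_nonneg hCs0 (norm_nonneg uc)
        simp only [pow_zero, mul_one]
        linarith
      | Nat.succ n =>
        calc ‖a (n + 1)‖ = ‖cc ⬝ᵥ (Mc ^ n).mulVec uc‖ := by rw [hA]
          _ ≤ Cs * ‖(Mc ^ n).mulVec uc‖ := hdot _
          _ ≤ Cs * (L ^ n * ‖uc‖) := mul_le_mul_of_nonneg_left (hMn n) hCs0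
          _ = Cs * ‖uc‖ * L ^ n := by ring
          _ ≤ (‖a 0‖ + Cs * ‖uc‖ + 1) * L ^ n := by
              apply mul_le_mul_of_nonneg_right _ (pow_nonneg hL0 n)
              have := norm_nonneg (a 0)
              linarith
          _ ≤ (‖a 0‖ + Cs * ‖uc‖ + 1) * L ^ (n + 1) := by
              apply mul_le_mul_of_nonneg_left (pow_le_pow_right₀ hL1 (by omega))
              have := norm_nonneg (a 0)
              have := mul_nonneg hCs0 (norm_nonneg uc)
              linarith
  -- boundedness of the rpow sequence
  obtain ⟨K, L, hK1, hL1, hKL⟩ := hgrowth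
  have habsa : ∀ n, ‖a n‖ = |ξ ((φ ^ n) w)| := fun n => (Complex.norm_real _).trans (Real.norm_eq_abs _)
  have hbd : Filter.IsBoundedUnder (· ≤ ·) Filter.atTop u := by
    apply Filter.isBoundedUnder_of
    refine ⟨K * L, ?_⟩
    intro n
    match n with
    | 0 =>
      rw [hu]
      simp only [Nat.cast_zero, _root_.inv_zero, Real.rpow_zero]
      nlinarith
    | Nat.succ m =>
      set n := m + 1 with hn
      have hn0 : (n : ℝ) ≠ 0 := by positivity
      have h1 : |ξ ((φ ^ n) w)| ≤ K * L ^ n := by rw [← habsa]; exact hKL n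
      have h2 : u n ≤ (K * L ^ n) ^ ((n : ℝ)⁻¹) := by
        rw [hu]
        exact Real.rpow_le_rpow (abs_nonneg _) h1 (by positivity)
      have h3 : (K * L ^ n) ^ ((n : ℝ)⁻¹) = K ^ ((n : ℝ)⁻¹) * L := by
        rw [Real.mul_rpow (by linarith) (pow_nonneg (by linarith) _),
          aux_rpow_pow L (by linarith) n (by omega)]
      have h4 : K ^ ((n : ℝ)⁻¹) ≤ K := by
        nth_rewrite 2 [show K = K ^ (1:ℝ) from (Real.rpow_one K).symm]
        apply Real.rpow_le_rpow_of_exponent_le hK1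
        rw [inv_le_one_iff₀]
        right
        exact_mod_cast Nat.one_le_iff_ne_zero.mpr (by omega)
      calc u n ≤ K ^ ((n : ℝ)⁻¹) * L := h3 ▸ h2
        _ ≤ K * L := mul_le_mul_of_nonneg_right h4 (by linarith)
  -- eventual bound from the limsup
  have hev : ∀ ε : ℝ, 0 < ε → ∀ᶠ n in Filter.atTop, ‖a n‖ ≤ (ρ + ε) ^ n := by
    intro ε hε
    by_contra hcon2
    rw [Filter.not_eventually] at hcon2
    have h2 : ∃ᶠ n in Filter.atTop, ρ + ε ≤ u n := by
      apply (hcon2.and_eventually (Filter.eventually_ge_atTop 1)).mono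
      rintro n ⟨hn1, hn2⟩
      push_neg at hn1
      have h3 : ((ρ + ε) ^ n) ^ ((n : ℝ)⁻¹) ≤ u n := by
        rw [hu]
        apply Real.rpow_le_rpow (by positivity) _ (by positivity)
        rw [← habsa]
        exact le_of_lt hn1
      rwa [aux_rpow_pow _ (by positivity) n (by omega)] at h3
    have h4 : ρ + ε ≤ Filter.limsup u Filter.atTop :=
      Filter.le_limsup_of_frequently_le h2 hbd
    rw [← hρ] at h4
    linarith
  -- summability on the disc
  have hsum : ∀ z : ℂ, ‖z‖ < 1 / ρ → Summable fun n => ‖a n * z ^ n‖ := by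
    intro z hz
    rcases eq_or_ne z 0 with rfl | hz0
    · apply summable_of_ne_finset_zero (s := {0})
      intro n hn
      simp only [Finset.mem_singleton] at hn
      rw [zero_pow hn, mul_zero, norm_zero]
    · have habs : 0 < ‖z‖ := norm_pos_iff.mpr hz0
      have hρinv' : ρ < (‖z‖)⁻¹ := by
        rw [← one_div, lt_div_iff₀ habs]
        calc ρ * ‖z‖ < ρ * (1 / ρ) := mul_lt_mul_of_pos_left hz hρpos
          _ = 1 := by field_simp
      set ε : ℝ := ((‖z‖)⁻¹ - ρ) / 2 with hεdef
      have hε : 0 < ε := by rw [hεdef]; linarith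
      set q : ℝ := (ρ + ε) * ‖z‖ with hq
      have hq0 : 0 ≤ q := by positivity
      have hq1 : q < 1 := by
        rw [hq]
        have h5 : ρ + ε < (‖z‖)⁻¹ := by rw [hεdef]; linarith
        calc (ρ + ε) * ‖z‖ < (‖z‖)⁻¹ * ‖z‖ :=
              mul_lt_mul_of_pos_right h5 habs
          _ = 1 := inv_mul_cancel₀ (ne_of_gt habs)
      apply Summable.of_norm_bounded_eventually_nat
        (summable_geometric_of_lt_one hq0 hq1)
      filter_upwards [hev ε hε] with n hn
      rw [norm_norm, norm_mul, norm_pow]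
      calc ‖a n‖ * ‖z‖ ^ n ≤ (ρ + ε) ^ n * (‖z‖) ^ n := by
            apply mul_le_mul_of_nonneg_right hn (pow_nonneg (norm_nonneg z) n)
        _ = q ^ n := by rw [hq, mul_pow]
  -- the polynomials
  set D : Polynomial ℂ := Mc.charpolyRev with hD
  set b : ℕ → ℂ := fun m => ∑ j ∈ Finset.range (m + 1), D.coeff j * a (m - j) with hb
  set P : Polynomial ℂ := ∑ m ∈ Finset.range (k + 1), Polynomial.C (b m) * Polynomial.X ^ m
    with hP
  have hb0 : ∀ m, k + 1 ≤ m → b m = 0 := fun m hm => aux_rec k Mc cc uc a hA m hm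
  set g : ℂ → ℂ := fun z => ∑' n, a n * z ^ n with hg
  have hfun : ∀ z : ℂ, ‖z‖ < 1 / ρ → D.eval z * g z = P.eval z := by
    intro z hz
    rw [hg]
    simp only
    rw [aux_poly_mul_tsum D a z (hsum z hz)]
    rw [tsum_eq_sum (s := Finset.range (k + 1)) (by
      intro m hm
      simp only [Finset.mem_range, not_lt] at hm
      have h0 : (∑ j ∈ Finset.range (m + 1), D.coeff j * a (m - j)) = 0 := hb0 m hm
      rw [h0, zero_mul])]
    rw [hP]
    simp [Polynomial.eval_finset_sum]
    rfl
  -- power series for g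
  set p : FormalMultilinearSeries ℂ ℂ ℂ :=
    fun n => ContinuousMultilinearMap.mkPiRing ℂ (Fin n) (a n) with hp
  have hpnorm : ∀ n, ‖p n‖ = ‖a n‖ := by
    intro n
    rw [hp]
    simp only
    rw [ContinuousMultilinearMap.norm_mkPiRing]
  have hpsum : FormalMultilinearSeries.sum p = g := by
    funext z
    rw [FormalMultilinearSeries.sum, hg]
    apply tsum_congr
    intro n
    rw [hp]
    simp only [ContinuousMultilinearMap.mkPiRing_apply]
    rw [Finset.prod_const, Finset.card_univ, Fintype.card_fin, smul_eq_mul, mul_comm]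
  have hprad : ENNReal.ofReal (1 / ρ) ≤ p.radius := by
    apply ENNReal.le_of_forall_nnreal_lt
    intro r hr
    rcases eq_or_ne r 0 with rfl | hr0
    · simp
    have hrpos : (0:ℝ) < r := lt_of_le_of_ne r.coe_nonneg (by exact_mod_cast (Ne.symm hr0))
    have hrlt : (r : ℝ) < 1 / ρ := by
      rw [ENNReal.lt_ofReal_iff_toReal_lt ENNReal.coe_ne_top] at hr
      simpa using hr
    have hρr : ρ < (r : ℝ)⁻¹ := by
      rw [← one_div, lt_div_iff₀ hrpos]
      calc ρ * r < ρ * (1 / ρ) := mul_lt_mul_of_pos_left hrlt hρpos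
        _ = 1 := by field_simp
    set ε : ℝ := ((r : ℝ)⁻¹ - ρ) / 2 with hεdef
    have hε : 0 < ε := by rw [hεdef]; linarith
    have hq1 : (ρ + ε) * r ≤ 1 := by
      have h5 : ρ + ε < (r : ℝ)⁻¹ := by rw [hεdef]; linarith
      calc (ρ + ε) * r ≤ (r : ℝ)⁻¹ * r := le_of_lt (mul_lt_mul_of_pos_right h5 hrpos)
        _ = 1 := inv_mul_cancel₀ (ne_of_gt hrpos)
    apply p.le_radius_of_eventually_le 1
    filter_upwards [hev ε hε] with n hn
    rw [hpnorm]
    calc ‖a n‖ * (r : ℝ) ^ n ≤ (ρ + ε) ^ n * (r : ℝ) ^ n :=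
          mul_le_mul_of_nonneg_right hn (pow_nonneg (le_of_lt hrpos) n)
      _ = ((ρ + ε) * r) ^ n := (mul_pow _ _ _).symm
      _ ≤ 1 := pow_le_one₀ (by positivity) hq1
  have hpball : HasFPowerSeriesOnBall g p 0 p.radius := by
    rw [← hpsum]
    exact p.hasFPowerSeriesOnBall
      (lt_of_lt_of_le (by simp [ENNReal.ofReal_pos, hρpos]) hprad)
  -- continuity of g on the ball
  have hρinv : (0:ℝ) < 1 / ρ := by positivity
  have hball_sub : Metric.ball (0:ℂ) (1 / ρ) ⊆ Metric.eball (0:ℂ) p.radius := by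
    intro z hz
    rw [Metric.mem_ball, dist_zero_right] at hz
    rw [Metric.mem_eball, edist_zero_right]
    calc (‖z‖₊ : ℝ≥0∞) = ENNReal.ofReal ‖z‖ := (ofReal_norm z).symm
      _ < ENNReal.ofReal (1 / ρ) := by
          rw [ENNReal.ofReal_lt_ofReal_iff hρinv]; exact hz
      _ ≤ p.radius := hprad
  have hgcont : ContinuousOn g (Metric.ball (0:ℂ) (1 / ρ)) :=
    (hpball.continuousOn).mono hball_sub
  have hmem_ball : ∀ z : ℂ, z ∈ Metric.ball (0:ℂ) (1 / ρ) ↔ ‖z‖ < 1 / ρ := by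
    intro z
    rw [Metric.mem_ball, dist_zero_right]
  -- gcd business
  have hDeval1 : D.eval 0 = 1 := Matrix.eval_charpolyRev
  have hD0 : D ≠ 0 := by
    intro h
    rw [h] at hDeval1
    simp at hDeval1
  set G : Polynomial ℂ := GCDMonoid.gcd P D with hG
  have hG0 : G ≠ 0 := fun h => hD0 ((gcd_eq_zero_iff _ _).mp h).2
  set P' : Polynomial ℂ := P / G with hP'
  set D' : Polynomial ℂ := D / G with hD'
  have hPfac : P = G * P' :=
    (EuclideanDomain.mul_div_cancel' hG0 (gcd_dvd_left P D)).symm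
  have hDfac : D = G * D' :=
    (EuclideanDomain.mul_div_cancel' hG0 (gcd_dvd_right P D)).symm
  have hcop : IsCoprime P' D' := isCoprime_div_gcd_div_gcd hD0
  have hD'0 : D' ≠ 0 := by
    intro h
    rw [hDfac, h, mul_zero] at hD0
    exact hD0 rfl
  -- the reduced functional equation on the ball
  have hEq : ∀ z ∈ Metric.ball (0:ℂ) (1 / ρ), D'.eval z * g z = P'.eval z := by
    set F : ℂ → ℂ := fun z => D'.eval z * g z - P'.eval z with hF
    have hFcont : ContinuousOn F (Metric.ball (0:ℂ) (1 / ρ)) :=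
      (((D'.continuous_aeval).continuousOn.mul hgcont).sub
        (P'.continuous_aeval).continuousOn)
    have hFz : ∀ z ∈ Metric.ball (0:ℂ) (1 / ρ), G.eval z ≠ 0 → F z = 0 := by
      intro z hz hGz
      have h1 := hfun z ((hmem_ball z).mp hz)
      rw [hPfac, hDfac, Polynomial.eval_mul, Polynomial.eval_mul] at h1
      have h2 : G.eval z * (D'.eval z * g z) = G.eval z * P'.eval z := by
        rw [← h1]; ring
      have h3 := mul_left_cancel₀ hGz h2
      rw [hF]
      simp only
      rw [h3, sub_self]
    intro z hz
    rcases eq_or_ne (G.eval z) 0 with hGz | hGz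
    · have hfin : {x : ℂ | G.IsRoot x}.Finite := Polynomial.finite_setOf_isRoot hG0
      have hdense : Dense {x : ℂ | G.eval x ≠ 0} := by
        have := hfin.countable.dense_compl ℂ
        convert this using 1
        rfl
      set Sset : Set ℂ := Metric.ball (0:ℂ) (1 / ρ) ∩ {x : ℂ | G.eval x ≠ 0} with hSset
      have hsubcl : z ∈ closure Sset :=
        hdense.open_subset_closure_inter Metric.isOpen_ball hz
      have hne : (nhdsWithin z Sset).NeBot := mem_closure_iff_nhdsWithin_neBot.mp hsubcl
      have ht : Filter.Tendsto F (nhdsWithin z Sset) (nhds (F z)) :=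
        ((hFcont z hz).mono Set.inter_subset_left)
      have ht0 : Filter.Tendsto F (nhdsWithin z Sset) (nhds 0) := by
        apply Filter.Tendsto.congr' _ tendsto_const_nhds
        filter_upwards [self_mem_nhdsWithin] with x hx
        exact (hFz x hx.1 hx.2).symm
      have h5 : F z = 0 := tendsto_nhds_unique ht ht0
      exact sub_eq_zero.mp h5
    · exact sub_eq_zero.mp (hFz z hz hGz)
  -- all roots of D' lie strictly outside the closed disc of radius 1/ρ
  have hroots : ∀ x : ℂ, D'.eval x = 0 → 1 / ρ < ‖x‖ := by
    intro x hx
    have hDx : D.eval x = 0 := by rw [hDfac, Polynomial.eval_mul, hx, mul_zero]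
    have hne : ‖x‖ ≠ 1 / ρ := by
      intro h
      apply hcon x h
      rw [← aux_eval_charpolyRev Mc x]
      exact hDx
    rcases lt_or_gt_of_ne hne with hlt | hgt
    · exfalso
      have hz : x ∈ Metric.ball (0:ℂ) (1 / ρ) := (hmem_ball x).mpr hlt
      have h1 := hEq x hz
      rw [hx, zero_mul] at h1
      obtain ⟨A, B, hAB⟩ := hcop
      have h2 := congrArg (Polynomial.eval x) hAB
      simp only [Polynomial.eval_add, Polynomial.eval_mul, Polynomial.eval_one, hx,
        ← h1, mul_zero, add_zero] at h2
      exact zero_ne_one h2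
    · exact hgt
  -- choose radii
  set Sf : Finset ℝ := insert (1 / ρ + 1) (D'.roots.toFinset.image (fun x : ℂ => ‖x‖)) with hSf
  have hSne : Sf.Nonempty := ⟨_, Finset.mem_insert_self _ _⟩
  set R : ℝ := Sf.min' hSne with hRdef
  have hRgt : 1 / ρ < R := by
    rw [hRdef, Finset.lt_min'_iff]
    intro y hy
    rw [hSf, Finset.mem_insert] at hy
    rcases hy with rfl | hy
    · linarith
    · obtain ⟨x, hx1, rfl⟩ := Finset.mem_image.mp hy
      rw [Multiset.mem_toFinset, Polynomial.mem_roots hD'0] at hx1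
      exact hroots x hx1
  have hRroot : ∀ x : ℂ, D'.eval x = 0 → R ≤ ‖x‖ := by
    intro x hx
    apply Finset.min'_le
    rw [hSf]
    apply Finset.mem_insert_of_mem
    apply Finset.mem_image_of_mem
    rw [Multiset.mem_toFinset, Polynomial.mem_roots hD'0]
    exact hx
  have hD'ne : ∀ x : ℂ, ‖x‖ < R → D'.eval x ≠ 0 :=
    fun x hx h => absurd (hRroot x h) (not_le.mpr hx)
  set r' : ℝ := (1 / ρ + R) / 2 with hr'def
  have hr'1 : 1 / ρ < r' := by rw [hr'def]; linarith
  have hr'2 : r' < R := by rw [hr'def]; linarith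
  have hr'pos : 0 < r' := by linarith
  set r2 : ℝ := (r' + R) / 2 with hr2def
  have hr21 : r' < r2 := by rw [hr2def]; linarith
  have hr22 : r2 < R := by rw [hr2def]; linarith
  have hr2pos : 0 < r2 := by linarith
  -- the rational function h
  set h : ℂ → ℂ := fun z => P'.eval z / D'.eval z with hh
  have hr2coe : ((r2.toNNReal : ℝ≥0) : ℝ) = r2 := Real.coe_toNNReal _ (le_of_lt hr2pos)
  have hdiff : DifferentiableOn ℂ h (Metric.closedBall (0:ℂ) (r2.toNNReal : ℝ)) := by
    rw [hr2coe]
    apply DifferentiableOn.div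
    · exact (P'.differentiable).differentiableOn
    · exact (D'.differentiable).differentiableOn
    · intro x hx
      apply hD'ne
      rw [Metric.mem_closedBall, dist_zero_right] at hx
      calc ‖x‖ = ‖x‖ := rfl
        _ ≤ r2 := hx
        _ < R := hr22
  have hRnn : 0 < r2.toNNReal := Real.toNNReal_pos.mpr hr2pos
  have hq := hdiff.hasFPowerSeriesOnBall hRnn
  -- g = h near 0
  have hgh : g =ᶠ[nhds (0:ℂ)] h := by
    apply Filter.eventuallyEq_of_mem (Metric.ball_mem_nhds (0:ℂ) hρinv)
    intro z hz
    have h1 := hEq z hz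
    have h2 : D'.eval z ≠ 0 := by
      apply hD'ne
      calc ‖z‖ < 1 / ρ := (hmem_ball z).mp hz
        _ < R := hRgt
    rw [hh]
    simp only
    rw [eq_div_iff h2, mul_comm (g z)]
    exact h1
  have h1 : HasFPowerSeriesAt g p 0 := hpball.hasFPowerSeriesAt
  have h2 : HasFPowerSeriesAt g (cauchyPowerSeries h 0 r2.toNNReal) 0 :=
    (hq.hasFPowerSeriesAt).congr hgh.symm
  have hpq : p = cauchyPowerSeries h 0 r2.toNNReal := h1.eq_formalMultilinearSeries h2
  have hrad2 : (r'.toNNReal : ℝ≥0∞) < p.radius := by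
    rw [hpq]
    calc ((r'.toNNReal : ℝ≥0) : ℝ≥0∞) < ((r2.toNNReal : ℝ≥0) : ℝ≥0∞) := by
          rw [ENNReal.coe_lt_coe]
          exact_mod_cast (Real.toNNReal_lt_toNNReal_iff hr2pos).mpr hr21
      _ ≤ (cauchyPowerSeries h 0 r2.toNNReal).radius := hq.r_le
  obtain ⟨C, hC0, hCb⟩ := p.norm_mul_pow_le_of_lt_radius hrad2
  have hr'nncoe : ((r'.toNNReal : ℝ≥0) : ℝ) = r' := Real.coe_toNNReal _ (le_of_lt hr'pos)
  -- final contradiction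
  have hub : ∀ n : ℕ, 1 ≤ n → u n ≤ C ^ ((n : ℝ)⁻¹) * r'⁻¹ := by
    intro n hn
    have hb1 := hCb n
    rw [hpnorm, hr'nncoe] at hb1
    have hb2 : ‖a n‖ ≤ C * (r'⁻¹) ^ n := by
      rw [inv_pow, ← div_eq_mul_inv, le_div_iff₀ (pow_pos hr'pos n)]
      exact hb1
    have hb3 : u n ≤ (C * (r'⁻¹) ^ n) ^ ((n : ℝ)⁻¹) := by
      rw [hu]
      apply Real.rpow_le_rpow (abs_nonneg _) _ (by positivity)
      rw [← habsa]
      exact hb2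
    rwa [Real.mul_rpow (le_of_lt hC0) (pow_nonneg (inv_nonneg.mpr (le_of_lt hr'pos)) n),
      aux_rpow_pow _ (inv_nonneg.mpr (le_of_lt hr'pos)) n (by omega)] at hb3
  have hv : Filter.Tendsto (fun n : ℕ => C ^ ((n : ℝ)⁻¹) * r'⁻¹) Filter.atTop
      (nhds (1 * r'⁻¹)) := by
    apply Filter.Tendsto.mul_const
    have h0 : Filter.Tendsto (fun n : ℕ => ((n : ℝ)⁻¹)) Filter.atTop (nhds 0) :=
      tendsto_inv_atTop_nhds_zero_nat
    have hc : ContinuousAt (fun y : ℝ => C ^ y) 0 :=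
      Real.continuousAt_const_rpow (ne_of_gt hC0)
    have := hc.tendsto.comp h0
    simpa [Real.rpow_zero, Function.comp_def] using this
  have hlim : Filter.limsup u Filter.atTop ≤ 1 * r'⁻¹ := by
    calc Filter.limsup u Filter.atTop
        ≤ Filter.limsup (fun n : ℕ => C ^ ((n : ℝ)⁻¹) * r'⁻¹) Filter.atTop := by
          apply Filter.limsup_le_limsup
          · filter_upwards [Filter.eventually_ge_atTop 1] with n hn
            exact hub n hn
          · apply Filter.isCoboundedUnder_le_of_eventually_le Filter.atTop (x := 0)
            apply Filter.Eventually.of_forall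
            intro n
            rw [hu]
            positivity
          · exact hv.isBoundedUnder_le
      _ = 1 * r'⁻¹ := hv.limsup_eq
  rw [← hρ] at hlim
  have hinvlt : r'⁻¹ < ρ := by
    have hx : r'⁻¹ < (1 / ρ)⁻¹ := by
      apply inv_strictAnti₀ hρinv hr'1
    rwa [one_div, inv_inv] at hx
  rw [one_mul] at hlim
  linarith
end

section
/- Let F : Ω \ C_F → Ω be a PM map with lap set L_F, and for each lap I define σ(I) ∈ {−1,0,1} as in Lemma p8. If I ∈ L_F⁻ (F decreasing on I), then σ(I) = −1 if F has a fixed point in the interior of I, and σ(I) = 0 otherwise. Consequently Σ_{I ∈ L_F⁻} σ(I) = −#Fix⁻(F), where Fix⁻(F) is the set of fixed points of F in Ω \ C_F at which F is decreasing. -/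
open scoped Classical

/-- `[c,d]` is a lap of a piecewise monotone map with turning set `C` on `Ω`. -/
def IsLapOf (C : Finset ℝ) (Ω : Set ℝ) (c d : ℝ) : Prop :=
  c < d ∧ Set.Icc c d ⊆ Ω ∧ c ∈ C ∧ d ∈ C ∧ ∀ x ∈ Set.Ioo c d, x ∉ (C : Set ℝ)

/-- The one-sided limit `F(c+)`. -/
noncomputable def rightLim (F : ℝ → ℝ) (c : ℝ) : ℝ :=
  Filter.limUnder (nhdsWithin c (Set.Ioi c)) F

/-- The one-sided limit `F(d−)`. -/
noncomputable def leftLim' (F : ℝ → ℝ) (d : ℝ) : ℝ :=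
  Filter.limUnder (nhdsWithin d (Set.Iio d)) F

/-- The linear form `ω_c⁻` evaluated at `x`: `1` iff `x ∈ [c, bᵢ]`, where `[aᵢ,bᵢ]` is
the component of `Ω` containing `c`. -/
noncomputable def omegaMinus (m : ℕ) (a b : Fin m → ℝ) (c x : ℝ) : ℤ :=
  if ∃ i, c ∈ Set.Icc (a i) (b i) ∧ x ∈ Set.Icc c (b i) then 1 else 0

/-- The linear form `ω_c⁺` evaluated at `x`: `−1` iff `x ∈ ]c, bᵢ]`. -/
noncomputable def omegaPlus (m : ℕ) (a b : Fin m → ℝ) (c x : ℝ) : ℤ :=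
  if ∃ i, c ∈ Set.Icc (a i) (b i) ∧ x ∈ Set.Ioc c (b i) then -1 else 0

/-- `σ([c,d]) = ω_c⁺(F(c+)) + ω_d⁻(F(d−))`. -/
noncomputable def sigmaLap (m : ℕ) (a b : Fin m → ℝ) (F : ℝ → ℝ) (c d : ℝ) : ℤ :=
  omegaPlus m a b c (rightLim F c) + omegaMinus m a b d (leftLim' F d)



section Aux
variable {m : ℕ} {a b : Fin m → ℝ}

lemma comp_unique (horder : ∀ i j : Fin m, i < j → b i < a j)
    {i j : Fin m} {x : ℝ} (hi : x ∈ Set.Icc (a i) (b i)) (hj : x ∈ Set.Icc (a j) (b j)) :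
    i = j := by
  rcases lt_trichotomy i j with h | h | h
  · have := horder i j h; have := hi.2; have := hj.1; linarith
  · exact h
  · have := horder j i h; have := hi.1; have := hj.2; linarith

lemma gap_lemma (hab : ∀ i, a i < b i) (horder : ∀ i j : Fin m, i < j → b i < a j)
    {i j : Fin m} (hij : i < j) :
    ∃ p, b i < p ∧ p < a j ∧ p ∉ (⋃ k, Set.Icc (a k) (b k)) := by
  have h1 : (i : ℕ) + 1 < m := by
    have := j.isLt
    have : (i : ℕ) < (j : ℕ) := hij
    omega
  set k : Fin m := ⟨(i : ℕ) + 1, h1⟩ with hk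
  have hik : i < k := by simp [hk, Fin.lt_def]
  have hbk : b i < a k := horder i k hik
  have hkj : a k ≤ a j := by
    rcases eq_or_lt_of_le (show (k : ℕ) ≤ (j : ℕ) by
      have : (i : ℕ) < (j : ℕ) := hij; simp [hk]; omega) with h | h
    · exact le_of_eq (congrArg a (Fin.ext h))
    · exact le_of_lt ((hab k).trans (horder k j h))
  refine ⟨(b i + a k) / 2, by linarith, by linarith, ?_⟩
  intro hp
  obtain ⟨l, hl⟩ := Set.mem_iUnion.mp hp
  rcases le_or_gt (l : ℕ) (i : ℕ) with h | h
  · have hbl : b l ≤ b i := by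
      rcases eq_or_lt_of_le h with h | h
      · exact le_of_eq (congrArg b (Fin.ext h))
      · exact le_of_lt ((horder l i h).trans (hab i))
    have := hl.2; linarith
  · have hal : a k ≤ a l := by
      rcases eq_or_lt_of_le (show (k : ℕ) ≤ (l : ℕ) by simp [hk]; omega) with h | h
      · exact le_of_eq (congrArg a (Fin.ext h))
      · exact le_of_lt (lt_of_le_of_lt (hab k).le (horder k l h))
    have := hl.1; linarith

lemma icc_subset_comp (hab : ∀ i, a i < b i) (horder : ∀ i j : Fin m, i < j → b i < a j)
    {c d : ℝ} (hcd : c < d)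
    (h : Set.Icc c d ⊆ ⋃ k, Set.Icc (a k) (b k)) :
    ∃ i, Set.Icc c d ⊆ Set.Icc (a i) (b i) := by
  obtain ⟨i, hi⟩ := Set.mem_iUnion.mp (h ⟨le_refl c, hcd.le⟩)
  obtain ⟨j, hj⟩ := Set.mem_iUnion.mp (h ⟨hcd.le, le_refl d⟩)
  rcases lt_trichotomy i j with hij | hij | hij
  · obtain ⟨p, hp1, hp2, hp3⟩ := gap_lemma hab horder hij
    exact absurd (h ⟨by linarith [hi.2], by linarith [hj.1]⟩) hp3
  · subst hij
    exact ⟨i, fun x hx => ⟨hi.1.trans hx.1, hx.2.trans hj.2⟩⟩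
  · have := horder j i hij; have := hi.1; have := hj.2; linarith

lemma image_in_comp (hab : ∀ i, a i < b i) (horder : ∀ i j : Fin m, i < j → b i < a j)
    {C : Finset ℝ} {F : ℝ → ℝ} {c d : ℝ}
    (hmaps : ∀ x ∈ (⋃ k, Set.Icc (a k) (b k)) \ (C : Set ℝ),
      F x ∈ ⋃ k, Set.Icc (a k) (b k))
    (hlap : IsLapOf C (⋃ k, Set.Icc (a k) (b k)) c d)
    (hcont : ContinuousOn F (Set.Ioo c d))
    (hanti : StrictAntiOn F (Set.Ioo c d)) :
    ∃ j, ∀ x ∈ Set.Ioo c d, F x ∈ Set.Icc (a j) (b j) := by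
  have hmem : ∀ x ∈ Set.Ioo c d, F x ∈ ⋃ k, Set.Icc (a k) (b k) := fun x hx =>
    hmaps x ⟨hlap.2.1 (Set.Ioo_subset_Icc_self hx), hlap.2.2.2.2 x hx⟩
  have key : ∀ u ∈ Set.Ioo c d, ∀ v ∈ Set.Ioo c d, u < v →
      ∀ p q : Fin m, F u ∈ Set.Icc (a p) (b p) → F v ∈ Set.Icc (a q) (b q) → p = q := by
    intro u hu v hv huv p q hp hq
    by_contra hpq
    have hFvu : F v < F u := hanti hu hv huv
    rcases lt_trichotomy p q with h | h | h
    · have := horder p q h; have := hp.2; have := hq.1; linarith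
    · exact hpq h
    · obtain ⟨r, hr1, hr2, hr3⟩ := gap_lemma hab horder h
      have hsub : Set.Icc u v ⊆ Set.Ioo c d := Set.Icc_subset _ hu hv
      have := intermediate_value_Ioo' huv.le (hcont.mono hsub)
        (show r ∈ Set.Ioo (F v) (F u) from ⟨by linarith [hq.2], by linarith [hp.1]⟩)
      obtain ⟨z, hz, hFz⟩ := this
      have hz' : z ∈ Set.Ioo c d := hsub ⟨hz.1.le, hz.2.le⟩
      exact hr3 (hFz ▸ hmem z hz')
  set x₀ : ℝ := (c + d) / 2 with hx₀def
  have hx₀ : x₀ ∈ Set.Ioo c d := ⟨by simp [hx₀def]; linarith [hlap.1], by simp [hx₀def]; linarith [hlap.1]⟩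
  obtain ⟨j, hj⟩ := Set.mem_iUnion.mp (hmem x₀ hx₀)
  refine ⟨j, fun x hx => ?_⟩
  obtain ⟨k, hk⟩ := Set.mem_iUnion.mp (hmem x hx)
  rcases lt_trichotomy x x₀ with h | h | h
  · rw [← key x hx x₀ hx₀ h k j hk hj]; exact hk
  · subst h; rw [← comp_unique horder hk hj]; exact hk
  · rw [key x₀ hx₀ x hx h j k hj hk]; exact hk

lemma omegaPlus_eq_neg_one {c x : ℝ} {i : Fin m}
    (hci : c ∈ Set.Icc (a i) (b i)) (hx : x ∈ Set.Ioc c (b i)) :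
    omegaPlus m a b c x = -1 := if_pos ⟨i, hci, hx⟩

lemma omegaPlus_eq_zero (horder : ∀ i j : Fin m, i < j → b i < a j) {c x : ℝ} {i : Fin m}
    (hci : c ∈ Set.Icc (a i) (b i)) (hx : x ∉ Set.Ioc c (b i)) :
    omegaPlus m a b c x = 0 := by
  unfold omegaPlus
  rw [if_neg]
  rintro ⟨k, hck, hxk⟩
  exact hx (comp_unique horder hck hci ▸ hxk)

lemma omegaMinus_eq_one {c x : ℝ} {i : Fin m}
    (hci : c ∈ Set.Icc (a i) (b i)) (hx : x ∈ Set.Icc c (b i)) :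
    omegaMinus m a b c x = 1 := if_pos ⟨i, hci, hx⟩

lemma omegaMinus_eq_zero (horder : ∀ i j : Fin m, i < j → b i < a j) {c x : ℝ} {i : Fin m}
    (hci : c ∈ Set.Icc (a i) (b i)) (hx : x ∉ Set.Icc c (b i)) :
    omegaMinus m a b c x = 0 := by
  unfold omegaMinus
  rw [if_neg]
  rintro ⟨k, hck, hxk⟩
  exact hx (comp_unique horder hck hci ▸ hxk)

end Aux
lemma lap_dichotomy {m : ℕ} {a b : Fin m → ℝ}
    (hab : ∀ i, a i < b i) (horder : ∀ i j : Fin m, i < j → b i < a j)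
    {C : Finset ℝ} {F : ℝ → ℝ}
    (hmaps : ∀ x ∈ (⋃ k, Set.Icc (a k) (b k)) \ (C : Set ℝ),
      F x ∈ ⋃ k, Set.Icc (a k) (b k))
    {c d : ℝ} (hlap : IsLapOf C (⋃ k, Set.Icc (a k) (b k)) c d)
    (hcont : ContinuousOn F (Set.Ioo c d))
    (hanti : StrictAntiOn F (Set.Ioo c d)) :
    ((∃ x ∈ Set.Ioo c d, F x = x) → sigmaLap m a b F c d = -1) ∧
    ((¬ ∃ x ∈ Set.Ioo c d, F x = x) → sigmaLap m a b F c d = 0) := by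
  have hcd : c < d := hlap.1
  obtain ⟨i, hIcc⟩ := icc_subset_comp hab horder hcd hlap.2.1
  obtain ⟨j, himg⟩ := image_in_comp hab horder hmaps hlap hcont hanti
  have hci : c ∈ Set.Icc (a i) (b i) := hIcc ⟨le_refl c, hcd.le⟩
  have hdi : d ∈ Set.Icc (a i) (b i) := hIcc ⟨hcd.le, le_refl d⟩
  have hne : (Set.Ioo c d).Nonempty := Set.nonempty_Ioo.2 hcd
  have hbdda : BddAbove (F '' Set.Ioo c d) := by
    refine ⟨b j, ?_⟩; rintro y ⟨x, hx, rfl⟩; exact (himg x hx).2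
  have hbddb : BddBelow (F '' Set.Ioo c d) := by
    refine ⟨a j, ?_⟩; rintro y ⟨x, hx, rfl⟩; exact (himg x hx).1
  have hSne : (F '' Set.Ioo c d).Nonempty := hne.image F
  have hM : rightLim F c = sSup (F '' Set.Ioo c d) :=
    (hanti.antitoneOn.tendsto_nhdsWithin_Ioo_right hne hbdda).limUnder_eq
  have hL : leftLim' F d = sInf (F '' Set.Ioo c d) :=
    (hanti.antitoneOn.tendsto_nhdsWithin_Ioo_left hne hbddb).limUnder_eq
  set M := sSup (F '' Set.Ioo c d) with hMdef
  set L := sInf (F '' Set.Ioo c d) with hLdef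
  have hMle : M ≤ b j := csSup_le hSne (by rintro y ⟨x, hx, rfl⟩; exact (himg x hx).2)
  have hLge : a j ≤ L := le_csInf hSne (by rintro y ⟨x, hx, rfl⟩; exact (himg x hx).1)
  have hFleM : ∀ x ∈ Set.Ioo c d, F x ≤ M := fun x hx => le_csSup hbdda ⟨x, hx, rfl⟩
  have hLleF : ∀ x ∈ Set.Ioo c d, L ≤ F x := fun x hx => csInf_le hbddb ⟨x, hx, rfl⟩
  have hx₀ : (c + d) / 2 ∈ Set.Ioo c d := ⟨by linarith, by linarith⟩
  set x₀ : ℝ := (c + d) / 2 with hx₀def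
  constructor
  · rintro ⟨y₀, hy₀, hFy₀⟩
    have hji : j = i := by
      have h1 : y₀ ∈ Set.Icc (a j) (b j) := hFy₀ ▸ himg y₀ hy₀
      exact comp_unique horder h1 (hIcc (Set.Ioo_subset_Icc_self hy₀))
    subst hji
    have h1 : omegaPlus m a b c M = -1 := by
      refine omegaPlus_eq_neg_one hci ⟨?_, hMle⟩
      have := hFleM y₀ hy₀; rw [hFy₀] at this; linarith [hy₀.1]
    have h2 : omegaMinus m a b d L = 0 := by
      refine omegaMinus_eq_zero horder hdi ?_
      intro hLm
      have := hLleF y₀ hy₀; rw [hFy₀] at this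
      have := hLm.1; linarith [hy₀.2]
    unfold sigmaLap
    rw [hM, hL, h1, h2]; norm_num
  · intro hnofix
    have hne' : ∀ x ∈ Set.Ioo c d, F x ≠ x := fun x hx h => hnofix ⟨x, hx, h⟩
    have hsign : (∀ x ∈ Set.Ioo c d, x < F x) ∨ (∀ x ∈ Set.Ioo c d, F x < x) := by
      by_contra hcon
      push_neg at hcon
      obtain ⟨⟨u, hu, hFu⟩, ⟨v, hv, hFv⟩⟩ := hcon
      have hFu' : F u < u := lt_of_le_of_ne hFu (hne' u hu)
      have hFv' : v < F v := lt_of_le_of_ne hFv (Ne.symm (hne' v hv))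
      set g : ℝ → ℝ := fun x => F x - x with hg
      have hcg : ∀ w₁ ∈ Set.Ioo c d, ∀ w₂ ∈ Set.Ioo c d,
          ContinuousOn g (Set.Icc w₁ w₂) := by
        intro w₁ hw₁ w₂ hw₂
        exact (hcont.mono (Set.Icc_subset _ hw₁ hw₂)).sub continuousOn_id
      rcases lt_trichotomy u v with h | h | h
      · obtain ⟨z, hz, hgz⟩ := intermediate_value_Ioo h.le (hcg u hu v hv)
          (show (0:ℝ) ∈ Set.Ioo (g u) (g v) from ⟨by simp [hg]; linarith, by simp [hg]; linarith⟩)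
        have hz' : z ∈ Set.Ioo c d := Set.Icc_subset _ hu hv ⟨hz.1.le, hz.2.le⟩
        exact hne' z hz' (by simpa [hg, sub_eq_zero] using hgz)
      · subst h; linarith
      · obtain ⟨z, hz, hgz⟩ := intermediate_value_Ioo' h.le (hcg v hv u hu)
          (show (0:ℝ) ∈ Set.Ioo (g u) (g v) from ⟨by simp [hg]; linarith, by simp [hg]; linarith⟩)
        have hz' : z ∈ Set.Ioo c d := Set.Icc_subset _ hv hu ⟨hz.1.le, hz.2.le⟩
        exact hne' z hz' (by simpa [hg, sub_eq_zero] using hgz)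
    rcases hsign with hpos | hneg
    · by_cases hji : j = i
      · subst hji
        have h1 : omegaPlus m a b c M = -1 := by
          refine omegaPlus_eq_neg_one hci ⟨?_, hMle⟩
          have := hFleM x₀ hx₀
          have := hpos x₀ hx₀
          linarith [hx₀.1]
        have hlb : ∀ x ∈ Set.Ioo c d, x ≤ L := by
          intro x hx
          refine le_csInf hSne ?_
          rintro y ⟨w, hw, rfl⟩
          rcases le_or_gt w x with h | h
          · have h1 : F x ≤ F w := hanti.antitoneOn hw hx h
            have := hpos x hx
            linarith
          · have := hpos w hw; linarith
        have hdL : d ≤ L := by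
          by_contra hLd
          push_neg at hLd
          have hx : (max c L + d) / 2 ∈ Set.Ioo c d :=
            ⟨by have := le_max_left c L; nlinarith [max_lt hcd hLd],
             by have := max_lt hcd hLd; linarith⟩
          have := hlb _ hx
          have := le_max_right c L
          have := max_lt hcd hLd
          nlinarith
        have h2 : omegaMinus m a b d L = 1 := by
          refine omegaMinus_eq_one hdi ⟨hdL, ?_⟩
          exact le_trans (hLleF x₀ hx₀) (himg x₀ hx₀).2
        unfold sigmaLap
        rw [hM, hL, h1, h2]; norm_num
      · have hij : i < j := by
          rcases lt_or_gt_of_ne (Ne.symm hji) with h | h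
          · exact h
          · exfalso
            have h1 : b j < a i := horder j i h
            have h2 : F x₀ ≤ b j := (himg x₀ hx₀).2
            have := hpos x₀ hx₀
            have := hci.1
            have := hx₀.1
            linarith
        have hba : b i < a j := horder i j hij
        have h1 : omegaPlus m a b c M = 0 := by
          refine omegaPlus_eq_zero horder hci ?_
          rintro ⟨_, h⟩
          have : a j ≤ M := le_trans (himg x₀ hx₀).1 (hFleM x₀ hx₀)
          linarith
        have h2 : omegaMinus m a b d L = 0 := by
          refine omegaMinus_eq_zero horder hdi ?_
          rintro ⟨_, h⟩
          linarith
        unfold sigmaLap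
        rw [hM, hL, h1, h2]; norm_num
    · have hub : ∀ x ∈ Set.Ioo c d, M ≤ x := by
        intro x hx
        refine csSup_le hSne ?_
        rintro y ⟨w, hw, rfl⟩
        rcases le_or_gt x w with h | h
        · have h1 : F w ≤ F x := hanti.antitoneOn hx hw h
          have := hneg x hx
          linarith
        · have := hneg w hw; linarith
      have hMc : M ≤ c := by
        by_contra hcM
        push_neg at hcM
        have hx : (c + min d M) / 2 ∈ Set.Ioo c d :=
          ⟨by have := lt_min hcd hcM; linarith,
           by have := min_le_left d M; have := lt_min hcd hcM; linarith⟩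
        have := hub _ hx
        have := min_le_right d M
        have := lt_min hcd hcM
        linarith
      have h1 : omegaPlus m a b c M = 0 := by
        refine omegaPlus_eq_zero horder hci ?_
        rintro ⟨h, _⟩
        linarith
      have h2 : omegaMinus m a b d L = 0 := by
        refine omegaMinus_eq_zero horder hdi ?_
        rintro ⟨h, _⟩
        have : L ≤ M := csInf_le_csSup hSne hbddb hbdda
        linarith
      unfold sigmaLap
      rw [hM, hL, h1, h2]; norm_num

lemma lap_unique {C : Finset ℝ} {Ω : Set ℝ} {c d c' d' x : ℝ}
    (h : IsLapOf C Ω c d) (h' : IsLapOf C Ω c' d')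
    (hx : x ∈ Set.Ioo c d) (hx' : x ∈ Set.Ioo c' d') : c = c' ∧ d = d' := by
  have hcc : ∀ c₁ d₁ c₂ d₂ : ℝ, IsLapOf C Ω c₁ d₁ → IsLapOf C Ω c₂ d₂ →
      x ∈ Set.Ioo c₁ d₁ → x ∈ Set.Ioo c₂ d₂ → c₂ ≤ c₁ := by
    intro c₁ d₁ c₂ d₂ h1 h2 hx1 hx2
    by_contra hlt
    push_neg at hlt
    exact h1.2.2.2.2 c₂ ⟨hlt, hx2.1.trans hx1.2⟩ h2.2.2.1
  have hdd : ∀ c₁ d₁ c₂ d₂ : ℝ, IsLapOf C Ω c₁ d₁ → IsLapOf C Ω c₂ d₂ →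
      x ∈ Set.Ioo c₁ d₁ → x ∈ Set.Ioo c₂ d₂ → d₁ ≤ d₂ := by
    intro c₁ d₁ c₂ d₂ h1 h2 hx1 hx2
    by_contra hlt
    push_neg at hlt
    exact h1.2.2.2.2 d₂ ⟨hx1.1.trans hx2.2, hlt⟩ h2.2.2.2.1
  exact ⟨le_antisymm (hcc c' d' c d h' h hx' hx) (hcc c d c' d' h h' hx hx'),
    le_antisymm (hdd c d c' d' h h' hx hx') (hdd c' d' c d h' h hx' hx)⟩

/-- For a PM map `F` on `Ω` and a decreasing lap `I = [c,d]`,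
`σ(I) = −1` if `F` has a fixed point in `]c,d[` and `σ(I) = 0` otherwise; consequently
`Σ_{I ∈ L_F⁻} σ(I) = −#Fix⁻(F)`, where `Fix⁻(F)` is the set of fixed points of `F` in
`Ω \ C_F` at which `F` is decreasing. -/
theorem sigma_decreasing_laps_count_neg_fixed_points
    (m : ℕ) (a b : Fin m → ℝ)
    (hab : ∀ i, a i < b i)
    (horder : ∀ i j : Fin m, i < j → b i < a j)
    (C : Finset ℝ) (hC : ∀ i, a i ∈ C ∧ b i ∈ C)
    (F : ℝ → ℝ)
    (hmaps : ∀ x ∈ (⋃ j, Set.Icc (a j) (b j)) \ (C : Set ℝ),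
      F x ∈ ⋃ j, Set.Icc (a j) (b j))
    (hpm : ∀ c d : ℝ, IsLapOf C (⋃ j, Set.Icc (a j) (b j)) c d →
      ContinuousOn F (Set.Ioo c d) ∧
      (StrictMonoOn F (Set.Ioo c d) ∨ StrictAntiOn F (Set.Ioo c d))) :
    (∀ c d : ℝ, IsLapOf C (⋃ j, Set.Icc (a j) (b j)) c d →
      StrictAntiOn F (Set.Ioo c d) →
      ((∃ x ∈ Set.Ioo c d, F x = x) → sigmaLap m a b F c d = -1) ∧
      ((¬ ∃ x ∈ Set.Ioo c d, F x = x) → sigmaLap m a b F c d = 0)) ∧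
    (∑ q ∈ C ×ˢ C,
        (if IsLapOf C (⋃ j, Set.Icc (a j) (b j)) q.1 q.2 ∧
            StrictAntiOn F (Set.Ioo q.1 q.2)
          then sigmaLap m a b F q.1 q.2 else 0))
      = -({x : ℝ | x ∈ (⋃ j, Set.Icc (a j) (b j)) \ (C : Set ℝ) ∧ F x = x ∧
            ∃ c d : ℝ, IsLapOf C (⋃ j, Set.Icc (a j) (b j)) c d ∧
              x ∈ Set.Ioo c d ∧ StrictAntiOn F (Set.Ioo c d)}.ncard : ℤ) := by
  have part1 : ∀ c d : ℝ, IsLapOf C (⋃ j, Set.Icc (a j) (b j)) c d →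
      StrictAntiOn F (Set.Ioo c d) →
      ((∃ x ∈ Set.Ioo c d, F x = x) → sigmaLap m a b F c d = -1) ∧
      ((¬ ∃ x ∈ Set.Ioo c d, F x = x) → sigmaLap m a b F c d = 0) :=
    fun c d hlap hanti => lap_dichotomy hab horder hmaps hlap (hpm c d hlap).1 hanti
  refine ⟨part1, ?_⟩
  set Ω : Set ℝ := ⋃ j, Set.Icc (a j) (b j) with hΩ
  set P : ℝ × ℝ → Prop := fun q => IsLapOf C Ω q.1 q.2 ∧
    StrictAntiOn F (Set.Ioo q.1 q.2) ∧ ∃ x ∈ Set.Ioo q.1 q.2, F x = x with hP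
  set T : Finset (ℝ × ℝ) := (C ×ˢ C).filter P with hT
  have hsum : (∑ q ∈ C ×ˢ C,
        (if IsLapOf C Ω q.1 q.2 ∧ StrictAntiOn F (Set.Ioo q.1 q.2)
          then sigmaLap m a b F q.1 q.2 else 0))
      = ∑ q ∈ C ×ˢ C, (if P q then (-1 : ℤ) else 0) := by
    refine Finset.sum_congr rfl fun q hq => ?_
    by_cases h1 : IsLapOf C Ω q.1 q.2 ∧ StrictAntiOn F (Set.Ioo q.1 q.2)
    · rw [if_pos h1]
      by_cases h2 : ∃ x ∈ Set.Ioo q.1 q.2, F x = x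
      · rw [if_pos ⟨h1.1, h1.2, h2⟩, (part1 q.1 q.2 h1.1 h1.2).1 h2]
      · rw [if_neg (fun hp => h2 hp.2.2), (part1 q.1 q.2 h1.1 h1.2).2 h2]
    · rw [if_neg h1, if_neg (fun hp => h1 ⟨hp.1, hp.2.1⟩)]
  set f : ℝ × ℝ → ℝ :=
    fun q => if h : ∃ x ∈ Set.Ioo q.1 q.2, F x = x then h.choose else 0 with hf
  have hfspec : ∀ q, P q → f q ∈ Set.Ioo q.1 q.2 ∧ F (f q) = f q := by
    rintro q ⟨_, _, hex⟩
    simp only [hf, dif_pos hex]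
    exact ⟨hex.choose_spec.1, hex.choose_spec.2⟩
  have hfp_unique : ∀ (c d : ℝ), StrictAntiOn F (Set.Ioo c d) →
      ∀ x ∈ Set.Ioo c d, ∀ y ∈ Set.Ioo c d, F x = x → F y = y → x = y := by
    intro c d hanti x hx y hy hfx hfy
    rcases lt_trichotomy x y with h | h | h
    · have := hanti hx hy h; rw [hfx, hfy] at this; linarith
    · exact h
    · have := hanti hy hx h; rw [hfx, hfy] at this; linarith
  have hSeq : {x : ℝ | x ∈ Ω \ (C : Set ℝ) ∧ F x = x ∧
      ∃ c d : ℝ, IsLapOf C Ω c d ∧ x ∈ Set.Ioo c d ∧ StrictAntiOn F (Set.Ioo c d)}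
      = ↑(T.image f) := by
    ext x
    simp only [Set.mem_setOf_eq, Finset.coe_image, Set.mem_image, Finset.mem_coe, hT,
      Finset.mem_filter, Finset.mem_product]
    constructor
    · rintro ⟨hxΩ, hfx, c, d, hlap, hx, hanti⟩
      have hPq : P (c, d) := ⟨hlap, hanti, ⟨x, hx, hfx⟩⟩
      refine ⟨(c, d), ⟨⟨hlap.2.2.1, hlap.2.2.2.1⟩, hPq⟩, ?_⟩
      obtain ⟨hmem, hfix⟩ := hfspec (c, d) hPq
      exact hfp_unique c d hanti _ hmem x hx hfix hfx
    · rintro ⟨q, ⟨hqC, hq⟩, rfl⟩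
      obtain ⟨hmem, hfix⟩ := hfspec q hq
      obtain ⟨hlap, hanti, _⟩ := hq
      exact ⟨⟨hlap.2.1 (Set.Ioo_subset_Icc_self hmem), hlap.2.2.2.2 _ hmem⟩, hfix,
        q.1, q.2, hlap, hmem, hanti⟩
  have hinj : Set.InjOn f ↑T := by
    intro q hq q' hq' hfq
    have hq1 : P q := (Finset.mem_filter.mp hq).2
    have hq1' : P q' := (Finset.mem_filter.mp hq').2
    obtain ⟨hmem, hfix⟩ := hfspec q hq1
    obtain ⟨hmem', hfix'⟩ := hfspec q' hq1'
    rw [hfq] at hmem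
    obtain ⟨h1, h2⟩ := lap_unique hq1.1 hq1'.1 hmem hmem'
    exact Prod.ext h1 h2
  have hcard : ({x : ℝ | x ∈ Ω \ (C : Set ℝ) ∧ F x = x ∧
      ∃ c d : ℝ, IsLapOf C Ω c d ∧ x ∈ Set.Ioo c d ∧ StrictAntiOn F (Set.Ioo c d)}).ncard
      = T.card := by
    rw [hSeq, Set.ncard_coe_finset, Finset.card_image_of_injOn hinj]
  rw [hsum, ← Finset.sum_filter, ← hT, Finset.sum_const, hcard]
  simp
end
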